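/- arXiv:2006.11922 — 7 statements merged into one kernel-verified Lean document; each statement's English description precedes it below -/
import Mathlib

section
/- The image V of S is stable under integer translations: V + ℤ = V, i.e. for every v ∈ V and every n ∈ ℤ one has v + n ∈ V, and conversely every element of V is of this form. -/
/-- `e(w) = exp(2πiw)`. -/
noncomputable def e (w : ℂ) : ℂ := Complex.exp (2 * Real.pi * Complex.I * w)

lemma e_add (z w : ℂ) : e (z + w) = e z * e w := by
  rw [e, e, e, ← Complex.exp_add]; ring_nf

lemma e_int (n : ℤ) : e (n : ℂ) = 1 := by
  rw [e, show (2 * (Real.pi:ℂ) * Complex.I * (n:ℂ)) = (n:ℂ) * (2 * Real.pi * Complex.I) by ring,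
    Complex.exp_int_mul_two_pi_mul_I]

lemma norm_e (z : ℂ) : ‖e z‖ = Real.exp (-(2 * Real.pi * z.im)) := by
  rw [e, Complex.norm_exp]
  congr 1
  simp [Complex.mul_re, Complex.mul_im]

lemma norm_e_real (x : ℝ) : ‖e (x : ℂ)‖ = 1 := by
  rw [norm_e]; simp

lemma key_summable (z : ℂ) : Summable (fun l : ℕ => e (z / 2 ^ l) - 1) := by
  set M : ℝ := ‖(2 * Real.pi * Complex.I * z)‖ with hM
  obtain ⟨N, hN⟩ := pow_unbounded_of_one_lt M (one_lt_two (α := ℝ))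
  apply Summable.of_norm_bounded_eventually_nat (g := fun l => 2 * M * (1/2) ^ l)
  · exact (summable_geometric_of_lt_one (by norm_num) (by norm_num)).mul_left _
  · filter_upwards [Filter.eventually_ge_atTop N] with l hl
    have h2l : (0:ℝ) < 2 ^ l := by positivity
    have hMl : M ≤ 2 ^ l := le_trans hN.le (by exact_mod_cast pow_le_pow_right₀ one_le_two hl)
    have harg : e (z / 2 ^ l) = Complex.exp ((2 * Real.pi * Complex.I * z) / 2 ^ l) := by
      rw [e]; ring_nf
    have hnorm : ‖((2 * Real.pi * Complex.I * z) / 2 ^ l)‖ = M / 2 ^ l := by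
      rw [norm_div]; congr 1; simp
    have hle1 : ‖((2 * Real.pi * Complex.I * z) / 2 ^ l)‖ ≤ 1 := by
      rw [hnorm]; exact div_le_one_of_le₀ hMl h2l.le
    calc ‖e (z / 2 ^ l) - 1‖ = ‖Complex.exp ((2 * Real.pi * Complex.I * z) / 2 ^ l) - 1‖ := by
          rw [harg]
      _ ≤ 2 * (M / 2 ^ l) := by
          have := Complex.norm_exp_sub_one_le hle1
          rwa [hnorm] at this
      _ = 2 * M * (1/2) ^ l := by
          rw [div_pow, one_pow]; ring

/-- The Fredholm series `f(z) = ∑_{n=0}^∞ z^{2^n}`. -/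
noncomputable def f (z : ℂ) : ℂ := ∑' n : ℕ, z ^ (2 ^ n)

/-- `F(w) = f(e(w)) = ∑_{n=0}^∞ e(2^n w)` on the upper half-plane. -/
noncomputable def F (w : ℂ) : ℂ := ∑' n : ℕ, e ((2 ^ n : ℕ) * w)

lemma summable_F (w : ℂ) (hw : 0 < w.im) : Summable (fun n : ℕ => e ((2 ^ n : ℕ) * w)) := by
  set r : ℝ := Real.exp (-(2 * Real.pi * w.im)) with hr
  have hr0 : 0 < r := Real.exp_pos _
  have hr1 : r < 1 := by
    rw [hr, Real.exp_lt_one_iff]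
    have : 0 < 2 * Real.pi * w.im := by positivity
    linarith
  apply Summable.of_norm_bounded (g := fun n => r ^ n)
    (summable_geometric_of_lt_one hr0.le hr1)
  intro n
  have him : (((2 ^ n : ℕ) : ℂ) * w).im = (2 ^ n : ℕ) * w.im := by
    rw [show (((2 ^ n : ℕ) : ℂ)) = (((2 ^ n : ℕ) : ℝ) : ℂ) by push_cast; ring,
      Complex.im_ofReal_mul]
  rw [norm_e, him]
  have : Real.exp (-(2 * Real.pi * ((2 ^ n : ℕ) * w.im))) = r ^ (2 ^ n : ℕ) := by
    rw [hr, ← Real.exp_nat_mul]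
    congr 1; ring
  rw [this]
  exact pow_le_pow_of_le_one hr0.le hr1.le (Nat.lt_two_pow_self (n := n)).le

lemma F_eq (w : ℂ) (hw : 0 < w.im) : F (2 * w - 1) = F w - e w := by
  have hs : Summable (fun n : ℕ => e ((2 ^ n : ℕ) * w)) := summable_F w hw
  have hterm : ∀ n : ℕ, e ((2 ^ n : ℕ) * (2 * w - 1)) = e ((2 ^ (n + 1) : ℕ) * w) := by
    intro n
    have : ((2 ^ n : ℕ) : ℂ) * (2 * w - 1) = ((2 ^ (n + 1) : ℕ) : ℂ) * w + ((-(2 ^ n : ℤ) : ℤ) : ℂ) := by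
      push_cast; ring
    rw [this, e_add, e_int, mul_one]
  have h0 : F w = e ((2 ^ 0 : ℕ) * w) + ∑' n : ℕ, e ((2 ^ (n + 1) : ℕ) * w) := by
    rw [F]; exact hs.tsum_eq_zero_add
  rw [F]
  simp only [hterm]
  rw [h0]
  simp

/-- `G(w) = ∑_{l=1}^∞ e(−1/2^l)(e(w/2^l) − 1)` (indexing: `l = l' + 1`, `l' : ℕ`). -/
noncomputable def G (w : ℂ) : ℂ :=
  ∑' l : ℕ, e (-(1 / 2 ^ (l + 1))) * (e (w / 2 ^ (l + 1)) - 1)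

lemma neg_inv_pow_eq (l : ℕ) : (-(1 / 2 ^ l) : ℂ) = (((-(1 / 2 ^ l) : ℝ)) : ℂ) := by
  push_cast; ring

lemma summable_b (w : ℂ) : Summable (fun l : ℕ => e (-(1 / 2 ^ l)) * (e (w / 2 ^ l) - 1)) := by
  apply Summable.of_norm_bounded (g := fun l => ‖e (w / 2 ^ l) - 1‖) (key_summable w).norm
  intro l
  rw [norm_mul, neg_inv_pow_eq, norm_e_real, one_mul]

lemma summable_d : Summable (fun l : ℕ => e (-(1 / 2 ^ l)) - 1) := by
  have := key_summable (-1 : ℂ)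
  convert this using 2 with l
  congr 1
  ring

lemma e_neg_one : e (-1 : ℂ) = 1 := by
  have := e_int (-1)
  simpa using this

lemma G_term_eq (w : ℂ) (l : ℕ) :
    e (-(1 / 2 ^ (l + 1))) * (e ((2 * w - 1) / 2 ^ (l + 1)) - 1) =
      e (-(1 / 2 ^ l)) * (e (w / 2 ^ l) - 1) +
        ((e (-(1 / 2 ^ l)) - 1) - (e (-(1 / 2 ^ (l + 1))) - 1)) := by
  have h2l : (2 : ℂ) ^ l ≠ 0 := pow_ne_zero _ two_ne_zero
  have h2l1 : (2 : ℂ) ^ (l + 1) ≠ 0 := pow_ne_zero _ two_ne_zero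
  have h1 : e ((2 * w - 1) / 2 ^ (l + 1)) = e (w / 2 ^ l) * e (-(1 / 2 ^ (l + 1))) := by
    rw [← e_add]
    congr 1
    rw [pow_succ]
    field_simp
    ring
  have h2 : e (-(1 / 2 ^ (l + 1))) * e (-(1 / 2 ^ (l + 1))) = e (-(1 / 2 ^ l)) := by
    rw [← e_add]
    congr 1
    rw [pow_succ]
    field_simp
    ring
  rw [h1]
  have expand : e (-(1 / 2 ^ (l + 1))) * (e (w / 2 ^ l) * e (-(1 / 2 ^ (l + 1))) - 1) =
      (e (-(1 / 2 ^ (l + 1))) * e (-(1 / 2 ^ (l + 1)))) * e (w / 2 ^ l) - e (-(1 / 2 ^ (l + 1))) := by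
    ring
  rw [expand, h2]
  ring

set_option maxHeartbeats 1000000 in
lemma G_eq (w : ℂ) : G (2 * w - 1) = G w + e w - 1 := by
  have hb := summable_b w
  have hd := summable_d
  have hd' : Summable (fun l : ℕ => e (-(1 / 2 ^ (l + 1))) - 1) :=
    (summable_nat_add_iff 1).mpr hd
  have hc : Summable (fun l : ℕ => (e (-(1 / 2 ^ l)) - 1) - (e (-(1 / 2 ^ (l + 1))) - 1)) :=
    hd.sub hd'
  rw [G]
  simp only [G_term_eq w]
  rw [hb.tsum_add hc, hd.tsum_sub hd']
  have hshift : ∑' l : ℕ, (e (-(1 / 2 ^ l)) - 1) =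
      (e (-(1 / 2 ^ (0:ℕ))) - 1) + ∑' l : ℕ, (e (-(1 / 2 ^ (l + 1))) - 1) :=
    hd.tsum_eq_zero_add
  have hbshift : ∑' l : ℕ, e (-(1 / 2 ^ l)) * (e (w / 2 ^ l) - 1) =
      e (-(1 / 2 ^ (0:ℕ))) * (e (w / 2 ^ (0:ℕ)) - 1) +
        ∑' l : ℕ, e (-(1 / 2 ^ (l + 1))) * (e (w / 2 ^ (l + 1)) - 1) :=
    hb.tsum_eq_zero_add
  have h00 : e (-(1 / 2 ^ (0:ℕ))) = 1 := by
    rw [show (-(1 / 2 ^ (0:ℕ)) : ℂ) = (-1 : ℂ) by norm_num, e_neg_one]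
  rw [hbshift, hshift, h00]
  rw [G]
  simp only [pow_zero]
  ring_nf

/-- `S = F + G` on the upper half-plane. -/
noncomputable def S (w : ℂ) : ℂ := F w + G w

/-- The upper half-plane `ℍ = {w : ℂ | Im w > 0}`. -/
def UHP : Set ℂ := {w : ℂ | 0 < w.im}

/-- `V = S(ℍ)`, the image of `S` on the upper half-plane. -/
noncomputable def V : Set ℂ := S '' UHP

lemma S_eq (w : ℂ) (hw : 0 < w.im) : S (2 * w - 1) = S w - 1 := by
  rw [S, S, F_eq w hw, G_eq w]
  ring

lemma mem_UHP_double {w : ℂ} (hw : w ∈ UHP) : 2 * w - 1 ∈ UHP := by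
  simp only [UHP, Set.mem_setOf_eq] at *
  simp [Complex.sub_im, Complex.mul_im]
  linarith

lemma mem_UHP_half {w : ℂ} (hw : w ∈ UHP) : (w + 1) / 2 ∈ UHP := by
  simp only [UHP, Set.mem_setOf_eq] at *
  simp [Complex.div_im, Complex.add_im]
  linarith

lemma V_sub_one {v : ℂ} (hv : v ∈ V) : v - 1 ∈ V := by
  obtain ⟨w, hw, rfl⟩ := hv
  exact ⟨2 * w - 1, mem_UHP_double hw, S_eq w hw⟩

lemma V_add_one {v : ℂ} (hv : v ∈ V) : v + 1 ∈ V := by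
  obtain ⟨w, hw, rfl⟩ := hv
  refine ⟨(w + 1) / 2, mem_UHP_half hw, ?_⟩
  have h2 : 2 * ((w + 1) / 2) - 1 = w := by ring
  have := S_eq ((w + 1) / 2) (mem_UHP_half hw)
  rw [h2] at this
  rw [this]
  ring

lemma V_add_int {v : ℂ} (hv : v ∈ V) (n : ℤ) : v + (n : ℂ) ∈ V := by
  induction n using Int.induction_on with
  | zero => simpa using hv
  | succ k ih =>
      have := V_add_one ih
      convert this using 1
      push_cast; ring
  | pred k ih =>
      have := V_sub_one ih
      convert this using 1
      push_cast; ring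

/-- The image `V` of `S` is stable under integer translations: `V + ℤ = V`. -/
theorem V_add_int_eq_V :
    {u : ℂ | ∃ v ∈ V, ∃ n : ℤ, u = v + (n : ℂ)} = V := by
  ext u
  constructor
  · rintro ⟨v, hv, n, rfl⟩
    exact V_add_int hv n
  · intro hu
    exact ⟨u, hu, 0, by simp⟩
end

section
/- Let k ≥ 2 be an integer, q = 3^k, and let s be an integer coprime to q. Then ∑_{m=0}^{φ(q)−1} e(2^m s / q) = 0, where φ is Euler's totient function. -/
open Finset

lemma sum_stdAddChar_eq_zero (M : ℕ) [NeZero M] (hM : 1 < M) :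
    ∑ a : ZMod M, ZMod.stdAddChar a = (0 : ℂ) := by
  haveI := Fact.mk hM
  rw [AddChar.sum_eq_zero_iff_ne_zero]
  intro h
  have h1 : ZMod.stdAddChar (1 : ZMod M) = ZMod.stdAddChar (0 : ZMod M) := by
    simp [h]
  exact one_ne_zero (ZMod.injective_stdAddChar h1)

lemma order_two_zmod (k : ℕ) (hk : 2 ≤ k) (h : Nat.Coprime 2 (3 ^ k)) :
    orderOf (ZMod.unitOfCoprime 2 h) = Nat.totient (3 ^ k) := by
  haveI : NeZero (3 ^ k) := ⟨pow_ne_zero _ (by norm_num)⟩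
  set u := ZMod.unitOfCoprime 2 h
  set d := orderOf u with hd
  have hdvd : d ∣ Nat.totient (3 ^ k) := by
    rw [← ZMod.card_units_eq_totient]
    exact orderOf_dvd_card
  have hd0 : d ≠ 0 := (orderOf_pos u).ne'
  -- 3^k ∣ 2^d - 1 over ℤ
  have hu : (2 : ZMod (3 ^ k)) ^ d = 1 := by
    have := pow_orderOf_eq_one u
    have := congrArg (Units.val) this
    rw [Units.val_pow_eq_pow_val, Units.val_one] at this
    simpa [u, ZMod.coe_unitOfCoprime] using this
  have hkey : ((3 : ℤ) ^ k) ∣ 2 ^ d - 1 := by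
    have : (((2 : ℤ) ^ d - 1 : ℤ) : ZMod (3 ^ k)) = 0 := by push_cast [hu]; ring
    have := (ZMod.intCast_zmod_eq_zero_iff_dvd _ (3 ^ k)).mp this
    exact_mod_cast this
  -- d is even
  have heven : Even d := by
    by_contra hodd
    rw [Nat.not_even_iff_odd] at hodd
    have h3 : ((3 : ℤ)) ∣ 2 ^ d - 1 := dvd_trans (dvd_pow_self 3 (by omega)) hkey
    have : (((2 : ℤ) ^ d - 1 : ℤ) : ZMod 3) = 0 :=
      (ZMod.intCast_zmod_eq_zero_iff_dvd _ 3).mpr h3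
    have h2 : (2 : ZMod 3) = -1 := by decide
    rw [show ((((2 : ℤ) ^ d - 1 : ℤ)) : ZMod 3) = (2 : ZMod 3) ^ d - 1 by push_cast; ring,
      h2, hodd.neg_one_pow] at this
    have h1 : (-1 - 1 : ZMod 3) = 0 := this
    exact absurd h1 (by decide)
  obtain ⟨e, he⟩ := heven
  have he0 : e ≠ 0 := by omega
  have h4 : ((3 : ℤ) ^ k) ∣ 4 ^ e - 1 := by
    have h24 : (2 : ℤ) ^ d = 4 ^ e := by
      rw [he, ← two_mul, pow_mul]; norm_num
    rwa [h24] at hkey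
  -- lifting the exponent
  have hlte := Int.emultiplicity_pow_sub_pow (p := 3) Nat.prime_three (by decide)
      (x := 4) (y := 1) (by norm_num) (by norm_num) e
  have h31 : emultiplicity ((3 : ℕ) : ℤ) ((4 : ℤ) - 1) = 1 := by
    rw [show ((4 : ℤ) - 1) = 3 by norm_num, ← Nat.cast_one, emultiplicity_eq_coe]
    constructor
    · simp
    · norm_num
  rw [h31] at hlte
  have hle : (k : ℕ∞) ≤ emultiplicity ((3 : ℕ) : ℤ) ((4 : ℤ) ^ e - 1 ^ e) := by
    apply le_emultiplicity_of_pow_dvd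
    simpa using h4
  rw [hlte] at hle
  have hle2 : ((k - 1 : ℕ) : ℕ∞) ≤ emultiplicity 3 e := by
    have hk' : (k : ℕ∞) = ((k - 1 : ℕ) : ℕ∞) + 1 := by
      have hkk : k = (k - 1) + 1 := by omega
      rw [hkk]
      push_cast
      ring
    rw [hk', add_comm 1 (emultiplicity 3 e)] at hle
    exact (WithTop.add_le_add_iff_right (by exact ENat.one_ne_top)).mp hle
  have hdv : 3 ^ (k - 1) ∣ e := pow_dvd_of_le_emultiplicity hle2
  have htot : Nat.totient (3 ^ k) = 2 * 3 ^ (k - 1) := by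
    rw [Nat.totient_prime_pow Nat.prime_three (by omega)]
    ring
  refine Nat.dvd_antisymm hdvd ?_
  rw [htot, he, ← two_mul]
  exact mul_dvd_mul_left 2 hdv

/-- For `k ≥ 2`, `q = 3^k` and `s` coprime to `q`, the Ramanujan sum
`∑_{m=0}^{φ(q)−1} e(2^m s / q)` vanishes. -/
theorem ramanujan_sum_vanishes (k : ℕ) (hk : 2 ≤ k) (s : ℤ)
    (hs : IsCoprime s (3 ^ k : ℤ)) :
    ∑ m ∈ Finset.range (Nat.totient (3 ^ k)),
      e ((2 ^ m * s : ℤ) / (3 ^ k : ℕ)) = 0 := by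
  haveI : NeZero (3 ^ k) := ⟨pow_ne_zero _ (by norm_num)⟩
  haveI : NeZero (3 ^ (k - 1)) := ⟨pow_ne_zero _ (by norm_num)⟩
  set N := 3 ^ k with hN
  set M := 3 ^ (k - 1) with hM
  have hNM : N = 3 * M := by
    rw [hN, hM, ← pow_succ']
    congr 1
    omega
  have hM1 : 1 < M := by
    rw [hM]
    calc 1 < 3 := by norm_num
    _ ≤ 3 ^ (k - 1) := Nat.le_self_pow (by omega) 3
  have hN1 : 1 < N := by omega
  have hcop2 : Nat.Coprime 2 N := Nat.Coprime.pow_right _ (by decide)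
  set u := ZMod.unitOfCoprime 2 hcop2 with hu
  have hsunit : IsUnit ((s : ZMod N)) := by
    obtain ⟨a, b, hab⟩ := hs
    have h0 : (3 : ZMod N) ^ k = 0 := by
      have h0' : ((3 : ℕ) : ZMod N) ^ k = (((3 ^ k : ℕ)) : ZMod N) := by push_cast; ring
      have h0'' : ((3 : ℕ) : ZMod N) = (3 : ZMod N) := by norm_num
      rw [h0'', hN] at h0'
      rw [h0', ZMod.natCast_self]
    have hab2 : ((a * s + b * 3 ^ k : ℤ) : ZMod N) = 1 := by rw [hab]; norm_num
    push_cast at hab2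
    rw [h0] at hab2
    refine IsUnit.of_mul_eq_one (a : ZMod N) ?_
    rw [mul_comm]
    simpa using hab2
  set v := hsunit.unit with hv
  set ψ : AddChar (ZMod N) ℂ := ZMod.stdAddChar with hψ
  -- Step 1: each term is ψ of a unit power
  have hterm : ∀ m, e ((2 ^ m * s : ℤ) / (3 ^ k : ℕ)) = ψ ((u ^ m * v : (ZMod N)ˣ) : ZMod N) := by
    intro m
    have h1 : ((u ^ m * v : (ZMod N)ˣ) : ZMod N) = ((2 ^ m * s : ℤ) : ZMod N) := by
      have h2 : ((u : ZMod N)) = (2 : ZMod N) := by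
        rw [hu, ZMod.coe_unitOfCoprime]; norm_num
      push_cast
      rw [h2, hv, IsUnit.unit_spec]
    rw [h1, hψ, ZMod.stdAddChar_coe]
    rw [e]
    congr 1
    push_cast [hN]
    ring
  refine (Finset.sum_congr rfl fun m _ => hterm m).trans ?_
  -- Step 2: reindex over the unit group
  have horder : orderOf u = Nat.totient N := order_two_zmod k hk hcop2
  have hinj : ∀ x ∈ range (Nat.totient N), ∀ y ∈ range (Nat.totient N),
      u ^ x * v = u ^ y * v → x = y := by
    intro x hx y hy hxy
    have := mul_right_cancel hxy
    exact pow_injOn_Iio_orderOf (by simpa [horder] using mem_range.mp hx)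
      (by simpa [horder] using mem_range.mp hy) this
  have himg : (range (Nat.totient N)).image (fun m => u ^ m * v) = Finset.univ := by
    apply Finset.eq_univ_of_card
    rw [Finset.card_image_of_injOn hinj, Finset.card_range, ZMod.card_units_eq_totient]
  have hstep2 : ∑ m ∈ range (Nat.totient N), ψ ((u ^ m * v : (ZMod N)ˣ) : ZMod N)
      = ∑ w : (ZMod N)ˣ, ψ (w : ZMod N) := by
    rw [← himg, Finset.sum_image hinj]
  rw [hstep2]
  -- Step 3: sum over units = sum over filter IsUnit
  have hstep3 : ∑ w : (ZMod N)ˣ, ψ (w : ZMod N)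
      = ∑ a ∈ Finset.univ.filter (fun a : ZMod N => IsUnit a), ψ a := by
    have himg2 : (Finset.univ : Finset (ZMod N)ˣ).image (fun w : (ZMod N)ˣ => (w : ZMod N))
        = Finset.univ.filter (fun a : ZMod N => IsUnit a) := by
      ext a
      simp only [Finset.mem_image, Finset.mem_filter, Finset.mem_univ, true_and]
      exact Iff.rfl
    rw [← himg2, Finset.sum_image (fun x _ y _ h => Units.ext h)]
  rw [hstep3]
  -- Step 4: total sum is zero, nonunit sum is zero
  have htotal : ∑ a : ZMod N, ψ a = 0 := sum_stdAddChar_eq_zero N hN1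
  have hnonunit : ∑ a ∈ Finset.univ.filter (fun a : ZMod N => ¬ IsUnit a), ψ a = 0 := by
    set g : ZMod M → ZMod N := fun b => ((3 * b.val : ℕ) : ZMod N) with hg
    have hginj : ∀ x ∈ (Finset.univ : Finset (ZMod M)), ∀ y ∈ Finset.univ,
        g x = g y → x = y := by
      intro x _ y _ hxy
      have hxlt : 3 * x.val < N := by
        have := ZMod.val_lt x
        omega
      have hylt : 3 * y.val < N := by
        have := ZMod.val_lt y
        omega
      apply ZMod.val_injective
      have hvv : ((3 * x.val : ℕ) : ZMod N).val = ((3 * y.val : ℕ) : ZMod N).val :=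
        congrArg ZMod.val hxy
      rw [ZMod.val_cast_of_lt hxlt, ZMod.val_cast_of_lt hylt] at hvv
      omega
    have himg3 : (Finset.univ : Finset (ZMod M)).image g
        = Finset.univ.filter (fun a : ZMod N => ¬ IsUnit a) := by
      ext a
      simp only [Finset.mem_image, Finset.mem_filter, Finset.mem_univ, true_and]
      constructor
      · rintro ⟨b, -, rfl⟩
        intro hun
        have hlt : 3 * b.val < N := by
          have := ZMod.val_lt b
          omega
        obtain ⟨w, hw⟩ := hun
        have hcopr : Nat.Coprime (((3 * b.val : ℕ) : ZMod N)).val N := by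
          have := ZMod.val_coe_unit_coprime w
          rwa [hw] at this
        rw [ZMod.val_cast_of_lt hlt] at hcopr
        have h3 : (3 : ℕ) ∣ 3 * b.val := ⟨b.val, rfl⟩
        have h3N : (3 : ℕ) ∣ N := dvd_pow_self 3 (by omega)
        have h31 := Nat.Coprime.eq_one_of_dvd (Nat.Coprime.coprime_dvd_left h3 hcopr) h3N
        norm_num at h31
      · intro hun
        have hncop : ¬ Nat.Coprime a.val N := by
          intro hc
          apply hun
          rw [← ZMod.natCast_zmod_val a]
          exact (ZMod.isUnit_iff_coprime a.val N).mpr hc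
        have h3a : (3 : ℕ) ∣ a.val := by
          by_contra h3a
          apply hncop
          exact Nat.Coprime.pow_right _ ((Nat.Prime.coprime_iff_not_dvd Nat.prime_three).mpr h3a).symm
        obtain ⟨c, hc⟩ := h3a
        have hclt : c < M := by
          have := ZMod.val_lt a
          omega
        refine ⟨(c : ZMod M), ?_⟩
        rw [hg]
        simp only
        rw [ZMod.val_cast_of_lt hclt, ← hc, ZMod.natCast_zmod_val a]
    have hterm2 : ∀ b : ZMod M, ψ (g b) = ZMod.stdAddChar b := by
      intro b
      have h1 : g b = (((3 * b.val : ℕ) : ℤ) : ZMod N) := by push_cast [hg]; norm_cast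
      have h2 : b = (((b.val : ℕ) : ℤ) : ZMod M) := by
        push_cast
        rw [ZMod.natCast_zmod_val]
      rw [h1, hψ, ZMod.stdAddChar_coe]
      conv_rhs => rw [h2, ZMod.stdAddChar_coe]
      congr 1
      have hMne : ((M : ℕ) : ℂ) ≠ 0 := Nat.cast_ne_zero.mpr (by omega)
      have hNC : ((N : ℕ) : ℂ) = 3 * M := by rw [hNM]; push_cast; ring
      rw [hNC]
      push_cast
      field_simp
    calc ∑ a ∈ Finset.univ.filter (fun a : ZMod N => ¬ IsUnit a), ψ a
        = ∑ b : ZMod M, ψ (g b) := by rw [← himg3, Finset.sum_image hginj]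
      _ = ∑ b : ZMod M, ZMod.stdAddChar b := by simp_rw [hterm2]
      _ = 0 := sum_stdAddChar_eq_zero M hM1
  have := Finset.sum_filter_add_sum_filter_not Finset.univ (fun a : ZMod N => IsUnit a) ψ
  rw [htotal] at this
  rw [hnonunit] at this
  simpa using this
end

section
/- Let a ≥ 1 be an integer and set q = 3^{2^a}, θ₀ = 1/q and n₀ = φ(q) = 2·3^{2^a − 1}. Then q ≡ 1 (mod 2^{a+2}), and for every integer l with 0 ≤ l ≤ a the real number 2^{n₀−l}·θ₀ − (θ₀/2^l − 1/2^l) is an integer, i.e. 2^{n₀−l}θ₀ ≡ θ₀/2^l − 1/2^l (mod ℤ). -/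
lemma auxZ (a : ℕ) (ha : 1 ≤ a) : (2:ℤ)^(a+2) ∣ 3^(2^a) - 1 := by
  induction a with
  | zero => omega
  | succ n ih =>
    rcases Nat.eq_zero_or_pos n with h | h
    · subst h; norm_num
    · obtain ⟨c, hc⟩ := ih h
      refine ⟨c * (2^(n+1) * c + 1), ?_⟩
      have h1 : (3:ℤ)^(2^(n+1)) = (3^(2^n))^2 := by
        rw [← pow_mul]; ring_nf
      have h2 : (3:ℤ)^(2^n) = 2^(n+2) * c + 1 := by linarith
      rw [h1, h2]; ring

lemma auxN (a : ℕ) (ha : 1 ≤ a) : 2^(a+2) ∣ 3^(2^a) - 1 := by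
  have h := auxZ a ha
  have h1 : (1:ℕ) ≤ 3^(2^a) := Nat.one_le_pow _ _ (by norm_num)
  zify [h1]
  exact h

/-- Let `a ≥ 1`, `q = 3^(2^a)`, `θ₀ = 1/q`, `n₀ = φ(q) = 2·3^(2^a − 1)`. Then
`q ≡ 1 (mod 2^(a+2))`, and for `0 ≤ l ≤ a` one has
`2^(n₀−l)·θ₀ ≡ θ₀/2^l − 1/2^l (mod ℤ)`. -/
theorem congruence_two_pow_theta (a : ℕ) (ha : 1 ≤ a) :
    (3 ^ (2 ^ a)) % (2 ^ (a + 2)) = 1 ∧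
    Nat.totient (3 ^ (2 ^ a)) = 2 * 3 ^ (2 ^ a - 1) ∧
    ∀ l : ℕ, l ≤ a →
      ∃ z : ℤ,
        (2 : ℝ) ^ (2 * 3 ^ (2 ^ a - 1) - l) * (1 / (3 ^ (2 ^ a) : ℝ)) -
          ((1 / (3 ^ (2 ^ a) : ℝ)) / 2 ^ l - 1 / 2 ^ l) = (z : ℝ) := by
  set q : ℕ := 3 ^ (2 ^ a) with hq
  set n₀ : ℕ := 2 * 3 ^ (2 ^ a - 1) with hn₀
  have hq1 : 1 ≤ q := Nat.one_le_pow _ _ (by norm_num)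
  have hmod : q % 2 ^ (a + 2) = 1 := by
    have h1 : (1:ℕ) ≡ q [MOD 2^(a+2)] :=
      (Nat.modEq_iff_dvd' hq1).mpr (auxN a ha)
    have := h1.symm
    unfold Nat.ModEq at this
    rw [Nat.one_mod_eq_one.mpr (Nat.one_lt_two_pow_iff.mpr (by omega)).ne'] at this
    omega
  have htot : Nat.totient q = n₀ := by
    rw [hq, Nat.totient_prime_pow (by norm_num) (Nat.pow_pos (by norm_num))]
    ring
  refine ⟨hmod, htot, ?_⟩
  intro l hl
  -- key divisibility
  have hcop : Nat.Coprime 2 q := (Nat.coprime_primes (by norm_num) (by norm_num)).mpr (by norm_num) |>.pow_right _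
  have heuler : 2 ^ Nat.totient q ≡ 1 [MOD q] := Nat.ModEq.pow_totient hcop
  rw [htot] at heuler
  have h2n : 1 ≤ 2 ^ n₀ := Nat.one_le_two_pow
  have hqdvd : q ∣ 2 ^ n₀ - 1 := (Nat.modEq_iff_dvd' (by omega)).mp heuler.symm
  have hln : l ≤ n₀ := by
    have h1 : a < 2 ^ a := Nat.lt_two_pow_self
    have h2 : 2 ^ a ≤ 2 * 3 ^ (2 ^ a - 1) := by
      calc 2 ^ a = 2 * 2 ^ (a - 1) := by
            rw [← pow_succ']; congr 1; omega
        _ ≤ 2 * 3 ^ (a - 1) := by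
            gcongr <;> norm_num
        _ ≤ 2 * 3 ^ (2 ^ a - 1) := by gcongr <;> omega
    omega
  have h2ldvd : 2 ^ l ∣ 2 ^ n₀ + q - 1 := by
    have h1 : 2 ^ l ∣ q - 1 := dvd_trans (pow_dvd_pow 2 (by omega)) (auxN a ha)
    have h2 : 2 ^ l ∣ 2 ^ n₀ := pow_dvd_pow 2 hln
    have : 2 ^ n₀ + q - 1 = 2 ^ n₀ + (q - 1) := by omega
    rw [this]; exact Nat.dvd_add h2 h1
  have hqdvd' : q ∣ 2 ^ n₀ + q - 1 := by
    have : 2 ^ n₀ + q - 1 = (2 ^ n₀ - 1) + q := by omega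
    rw [this]; exact Nat.dvd_add hqdvd dvd_rfl
  have hdvd : 2 ^ l * q ∣ 2 ^ n₀ + q - 1 :=
    (Nat.Coprime.pow_left l hcop).mul_dvd_of_dvd_of_dvd h2ldvd hqdvd'
  obtain ⟨z, hz⟩ := hdvd
  refine ⟨z, ?_⟩
  have hzR : (2:ℝ) ^ n₀ + q - 1 = (2 ^ l * q : ℝ) * z := by
    have := congrArg (Nat.cast (R := ℝ)) hz
    push_cast [Nat.cast_sub (by omega : 1 ≤ 2 ^ n₀ + q)] at this
    push_cast
    linarith
  have hqR : (0:ℝ) < (q:ℝ) := by positivity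
  have hpow : (2:ℝ) ^ (n₀ - l) * 2 ^ l = 2 ^ n₀ := by
    rw [← pow_add]; congr 1; omega
  have hqcast : ((3:ℝ) ^ (2^a)) = (q : ℝ) := by push_cast [hq]; ring
  rw [hqcast]
  field_simp
  push_cast at hzR ⊢
  linear_combination hpow + hzR
end

section
/- For every integer m ≥ 1 one has the linear relation (1 − 2^m)·c(m) = ∑_{h=1}^m 2^{m−h}·binom(m,h)·c(m+h). -/
/-- `k_l = e(1/2^l) − 1` for `l ≥ 1`. -/
noncomputable def kSeq (l : ℕ) : ℂ := e (1 / 2 ^ l) - 1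

/-- `c(m) = ∑_{l=1}^∞ k_l^m` (indexing: `l = l' + 1`, `l' : ℕ`). -/
noncomputable def cc (m : ℕ) : ℂ := ∑' l : ℕ, (kSeq (l + 1)) ^ m

lemma kSeq_rec (l : ℕ) : kSeq l = 2 * kSeq (l+1) + (kSeq (l+1))^2 := by
  have h : e (1/2^l) = (e (1/2^(l+1)))^2 := by
    unfold e
    rw [sq, ← Complex.exp_add]
    congr 1
    have h2 : (2:ℂ)^(l+1) = 2 * 2^l := by ring
    have hne : (2:ℂ)^l ≠ 0 := pow_ne_zero _ two_ne_zero
    rw [h2]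
    field_simp
    ring
  unfold kSeq
  rw [h]; ring

lemma kSeq_one : kSeq 1 = -2 := by
  unfold kSeq e
  have : 2 * (Real.pi : ℂ) * Complex.I * (1 / 2 ^ 1) = Real.pi * Complex.I := by
    push_cast; ring
  rw [this, Complex.exp_pi_mul_I]; ring

lemma norm_kSeq_le (l : ℕ) : ‖kSeq (l+1)‖ ≤ 8 * (1/2)^l := by
  have habs : ‖(2 * (Real.pi:ℂ) * Complex.I * (1 / 2 ^ (l+1)))‖ = Real.pi / 2^l := by
    rw [norm_mul, norm_mul, norm_mul]
    rw [Complex.norm_I, Complex.norm_real, Real.norm_eq_abs, abs_of_nonneg Real.pi_pos.le]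
    rw [norm_div, norm_one, norm_pow]
    simp only [Complex.norm_two]
    rw [pow_succ]
    ring
  have hnorm1 : ‖(Complex.exp (2 * (Real.pi:ℂ) * Complex.I * (1 / 2 ^ (l+1))))‖ = 1 := by
    rw [Complex.norm_exp]
    have : (2 * (Real.pi:ℂ) * Complex.I * (1 / 2 ^ (l+1))).re = 0 := by
      have : 2 * (Real.pi:ℂ) * Complex.I * (1 / 2 ^ (l+1))
          = (2 * Real.pi / 2 ^ (l+1) : ℝ) * Complex.I := by push_cast; ring
      rw [this, Complex.mul_re, Complex.I_re, Complex.I_im, Complex.ofReal_re,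
        Complex.ofReal_im]
      ring
    rw [this, Real.exp_zero]
  have hle2 : ‖kSeq (l+1)‖ ≤ 2 := by
    unfold kSeq e
    calc ‖Complex.exp (2 * (Real.pi:ℂ) * Complex.I * (1 / 2 ^ (l+1))) - 1‖
        ≤ ‖Complex.exp (2 * (Real.pi:ℂ) * Complex.I * (1 / 2 ^ (l+1)))‖ + ‖(1:ℂ)‖ :=
          norm_sub_le _ _
      _ ≤ 2 := by rw [hnorm1]; norm_num
  rcases le_or_gt l 2 with hl | hl
  · refine hle2.trans ?_
    have h4 : (1/2:ℝ)^2 ≤ (1/2)^l := pow_le_pow_of_le_one (by norm_num) (by norm_num) hl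
    nlinarith
  · have hπ : Real.pi ≤ 4 := Real.pi_le_four
    have h2l : (4:ℝ) ≤ 2^l := by
      calc (4:ℝ) = 2^2 := by norm_num
      _ ≤ 2^l := pow_le_pow_right₀ (by norm_num) (by omega)
    have hx1 : ‖(2 * (Real.pi:ℂ) * Complex.I * (1 / 2 ^ (l+1)))‖ ≤ 1 := by
      rw [habs, div_le_one (by positivity)]
      linarith
    have hb := Complex.norm_exp_sub_one_le hx1
    unfold kSeq e
    calc ‖(Complex.exp (2 * (Real.pi:ℂ) * Complex.I * (1 / 2 ^ (l+1))) - 1)‖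
        ≤ 2 * (Real.pi / 2^l) := by rw [← habs]; exact hb
      _ ≤ 8 * (1/2)^l := by
          have hp : (0:ℝ) < 2^l := by positivity
          rw [div_pow, one_pow, mul_one_div, ← mul_div_assoc, div_le_div_iff₀ hp hp]
          nlinarith

lemma summable_kpow (n : ℕ) (hn : 1 ≤ n) : Summable (fun l : ℕ => (kSeq (l+1))^n) := by
  apply Summable.of_norm_bounded (g := fun l : ℕ => 8^n * (1/2)^l)
  · exact (summable_geometric_of_lt_one (by norm_num) (by norm_num)).mul_left _
  · intro l
    rw [norm_pow]
    calc ‖kSeq (l+1)‖^n ≤ (8 * (1/2)^l)^n :=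
          pow_le_pow_left₀ (norm_nonneg _) (norm_kSeq_le l) n
      _ = 8^n * ((1/2)^l)^n := mul_pow _ _ _
      _ ≤ 8^n * (1/2)^l := by
          apply mul_le_mul_of_nonneg_left _ (by positivity)
          rw [← pow_mul]
          apply pow_le_pow_of_le_one (by norm_num) (by norm_num)
          nlinarith

lemma summable_kpow' (n : ℕ) (hn : 1 ≤ n) : Summable (fun l : ℕ => (kSeq (l+2))^n) := by
  exact (summable_nat_add_iff (f := fun l : ℕ => (kSeq (l+1))^n) 1).2 (summable_kpow n hn)

/-- The linear relation `(1 − 2^m)·c(m) = ∑_{h=1}^m 2^{m−h}·binom(m,h)·c(m+h)`. -/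
theorem cc_linear_relation (m : ℕ) (hm : 1 ≤ m) :
    (1 - 2 ^ m : ℂ) * cc m =
      ∑ h ∈ Finset.Icc 1 m, (2 : ℂ) ^ (m - h) * (m.choose h : ℂ) * cc (m + h) := by
  have htail : ∀ n, 1 ≤ n → (∑' l : ℕ, (kSeq (l+2))^n) = cc n - (-2)^n := by
    intro n hn
    have h := Summable.tsum_eq_zero_add (summable_kpow n hn)
    rw [show (0:ℕ)+1 = 1 from rfl, kSeq_one] at h
    have h2 : cc n = (-2)^n + ∑' l : ℕ, (kSeq (l+1+1))^n := h
    have h3 : (fun l : ℕ => (kSeq (l+1+1))^n) = (fun l : ℕ => (kSeq (l+2))^n) := rfl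
    rw [h3] at h2
    rw [h2]; ring
  -- binomial expansion of each term
  have hexp : ∀ l : ℕ, (kSeq (l+1))^m =
      ∑ h ∈ Finset.range (m+1), (2:ℂ)^(m-h) * (m.choose h : ℂ) * (kSeq (l+2))^(m+h) := by
    intro l
    rw [kSeq_rec (l+1), add_pow,
      ← Finset.sum_range_reflect (fun h => (2:ℂ)^(m-h) * (m.choose h : ℂ) * (kSeq (l+2))^(m+h)) (m+1)]
    apply Finset.sum_congr rfl
    intro j hj
    rw [Finset.mem_range] at hj
    have hjm : j ≤ m := by omega
    have e1 : m + 1 - 1 - j = m - j := by omega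
    have e2 : m - (m - j) = j := by omega
    have e3 : m + (m - j) = j + 2 * (m - j) := by omega
    rw [e1, e2, e3, Nat.choose_symm hjm]
    have : (kSeq (l+1+1)) = kSeq (l+2) := rfl
    rw [this, mul_pow, mul_comm, ← pow_mul, pow_add]
    ring
  have key : cc m = ∑ h ∈ Finset.range (m+1),
      (2:ℂ)^(m-h) * (m.choose h : ℂ) * (cc (m+h) - (-2)^(m+h)) := by
    unfold cc
    calc (∑' l : ℕ, (kSeq (l+1))^m)
        = ∑' l : ℕ, ∑ h ∈ Finset.range (m+1),
            (2:ℂ)^(m-h) * (m.choose h : ℂ) * (kSeq (l+2))^(m+h) := by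
          exact tsum_congr hexp
      _ = ∑ h ∈ Finset.range (m+1), ∑' l : ℕ,
            (2:ℂ)^(m-h) * (m.choose h : ℂ) * (kSeq (l+2))^(m+h) := by
          apply Summable.tsum_finsetSum
          intro h _
          exact ((summable_kpow' (m+h) (by omega)).mul_left _)
      _ = ∑ h ∈ Finset.range (m+1),
            (2:ℂ)^(m-h) * (m.choose h : ℂ) * (cc (m+h) - (-2)^(m+h)) := by
          apply Finset.sum_congr rfl
          intro h _
          rw [tsum_mul_left, htail (m+h) (by omega)]
  have hzero : ∑ h ∈ Finset.range (m+1),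
      (2:ℂ)^(m-h) * (m.choose h : ℂ) * (-2)^(m+h) = 0 := by
    have halt : ∑ h ∈ Finset.range (m+1), (-1:ℂ)^h * (m.choose h : ℂ) = 0 := by
      have hap := add_pow (-1:ℂ) 1 m
      simp only [one_pow, mul_one, neg_add_cancel] at hap
      rw [zero_pow (by omega)] at hap
      rw [← hap]
    calc ∑ h ∈ Finset.range (m+1), (2:ℂ)^(m-h) * (m.choose h : ℂ) * (-2)^(m+h)
        = ∑ h ∈ Finset.range (m+1), ((-1)^m * 4^m) * ((-1:ℂ)^h * (m.choose h : ℂ)) := by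
          apply Finset.sum_congr rfl
          intro h hh
          rw [Finset.mem_range] at hh
          have hhm : h ≤ m := by omega
          have : ((-2):ℂ)^(m+h) = (-1)^m * (-1)^h * 2^(m+h) := by
            rw [show ((-2):ℂ) = -1 * 2 from by norm_num, mul_pow, pow_add]
          rw [this]
          have : (2:ℂ)^(m-h) * 2^(m+h) = 4^m := by
            rw [← pow_add, show m - h + (m + h) = 2*m from by omega, pow_mul]
            norm_num
          calc (2:ℂ)^(m-h) * (m.choose h : ℂ) * ((-1)^m * (-1)^h * 2^(m+h))
              = ((2:ℂ)^(m-h) * 2^(m+h)) * ((-1)^m * ((-1)^h * (m.choose h : ℂ))) := by ring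
            _ = (4:ℂ)^m * ((-1)^m * ((-1)^h * (m.choose h : ℂ))) := by rw [this]
            _ = ((-1)^m * 4^m) * ((-1:ℂ)^h * (m.choose h : ℂ)) := by ring
      _ = ((-1)^m * 4^m) * ∑ h ∈ Finset.range (m+1), (-1:ℂ)^h * (m.choose h : ℂ) := by
          rw [Finset.mul_sum]
      _ = 0 := by rw [halt, mul_zero]
  have key2 : cc m = (∑ h ∈ Finset.range (m+1),
      (2:ℂ)^(m-h) * (m.choose h : ℂ) * cc (m+h)) := by
    rw [key]
    rw [show ∀ S : Finset ℕ, ∑ h ∈ S, (2:ℂ)^(m-h) * (m.choose h : ℂ) * (cc (m+h) - (-2)^(m+h))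
      = ∑ h ∈ S, ((2:ℂ)^(m-h) * (m.choose h : ℂ) * cc (m+h)
        - (2:ℂ)^(m-h) * (m.choose h : ℂ) * (-2)^(m+h)) from fun S => by
          apply Finset.sum_congr rfl; intro h _; ring]
    rw [Finset.sum_sub_distrib, hzero, sub_zero]
  -- split off h = 0
  have hsplit : ∑ h ∈ Finset.range (m+1), (2:ℂ)^(m-h) * (m.choose h : ℂ) * cc (m+h)
      = (∑ i ∈ Finset.range m, (2:ℂ)^(m-(i+1)) * (m.choose (i+1) : ℂ) * cc (m+(i+1)))
        + 2^m * cc m := by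
    rw [Finset.sum_range_succ' (fun h => (2:ℂ)^(m-h) * (m.choose h : ℂ) * cc (m+h)) m]
    simp
  have hIcc : ∑ h ∈ Finset.Icc 1 m, (2 : ℂ) ^ (m - h) * (m.choose h : ℂ) * cc (m + h)
      = ∑ i ∈ Finset.range m, (2:ℂ)^(m-(i+1)) * (m.choose (i+1) : ℂ) * cc (m+(i+1)) := by
    have : Finset.Icc 1 m = Finset.Ico 1 (m+1) := by rw [Finset.Ico_add_one_right_eq_Icc]
    rw [this, Finset.sum_Ico_eq_sum_range]
    apply Finset.sum_congr (by congr 1)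
    intro i _
    rw [show 1 + i = i + 1 from by omega]
  rw [hIcc]
  have := key2
  rw [hsplit] at this
  linear_combination this
end

section
/- For every integer m ≥ 1, the real number σ(m) is an integer linear combination of σ_1, …, σ_m: there exist integers a_1, …, a_m such that σ(m) = ∑_{j=1}^m a_j·σ_j. -/
/-- `c_m = ∑_{l=1}^∞ (e(m/2^l) − 1)` (indexing: `l = l' + 1`, `l' : ℕ`). -/
noncomputable def c (m : ℤ) : ℂ := ∑' l : ℕ, (e ((m : ℂ) / 2 ^ (l + 1)) - 1)

/-- `σ_m = c_m + c_{−m}` (a real number). -/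
noncomputable def σ (m : ℤ) : ℂ := c m + c (-m)

/-- `σ(m) = ∑_{l=1}^∞ (e(1/2^l) + e(−1/2^l) − 2)^m`. -/
noncomputable def σbig (m : ℕ) : ℂ :=
  ∑' l : ℕ, (e (1 / 2 ^ (l + 1)) + e (-(1 / 2 ^ (l + 1))) - 2) ^ m

/-- The explicit integer coefficients. -/
def aa (m j : ℕ) : ℤ := (-1) ^ (m + j) * ((2 * m).choose (m + j))

open Finset in
/-- Generic splitting of an alternating binomial sum. -/
lemma split_sum {R : Type*} [CommRing R] (m : ℕ) (hm : 1 ≤ m) (u : ℕ → R) :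
    ∑ k ∈ range (2 * m + 1), (-1 : R) ^ k * ((2 * m).choose k : R) * u k
      = (∑ j ∈ Icc 1 m, (aa m j : R) * (u (m + j) + u (m - j)))
        + (-1 : R) ^ m * ((2 * m).choose m : R) * u m := by
  have h1 : ∑ k ∈ Ico (m + 1) (2 * m + 1), (-1 : R) ^ k * ((2 * m).choose k : R) * u k
      = ∑ j ∈ Icc 1 m, (aa m j : R) * u (m + j) := by
    refine Finset.sum_nbij' (fun k => k - m) (fun j => m + j) ?_ ?_ ?_ ?_ ?_
    · intro k hk; simp only [mem_Ico] at hk; simp only [mem_Icc]; omega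
    · intro j hj; simp only [mem_Icc] at hj; simp only [mem_Ico]; omega
    · intro k hk; simp only [mem_Ico] at hk; show m + (k - m) = k; omega
    · intro j hj; simp only [mem_Icc] at hj; show m + j - m = j; omega
    · intro k hk
      simp only [mem_Ico] at hk
      have hk2 : m + (k - m) = k := by omega
      show (-1 : R) ^ k * ((2 * m).choose k : R) * u k
          = (aa m (k - m) : R) * u (m + (k - m))
      simp only [aa]
      push_cast
      rw [hk2]
  have h2 : ∑ k ∈ Ico 0 m, (-1 : R) ^ k * ((2 * m).choose k : R) * u k
      = ∑ j ∈ Icc 1 m, (aa m j : R) * u (m - j) := by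
    refine Finset.sum_nbij' (fun k => m - k) (fun j => m - j) ?_ ?_ ?_ ?_ ?_
    · intro k hk; simp only [mem_Ico] at hk; simp only [mem_Icc]; omega
    · intro j hj; simp only [mem_Icc] at hj; simp only [mem_Ico]; omega
    · intro k hk; simp only [mem_Ico] at hk; show m - (m - k) = k; omega
    · intro j hj; simp only [mem_Icc] at hj; show m - (m - j) = j; omega
    · intro k hk
      simp only [mem_Ico] at hk
      have hmm : m - (m - k) = k := by omega
      have hch : (2 * m).choose (m + (m - k)) = (2 * m).choose k := by
        have h' : m + (m - k) = 2 * m - k := by omega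
        rw [h', Nat.choose_symm (by omega)]
      have hsgn : (-1 : R) ^ (m + (m - k)) = (-1 : R) ^ k := by
        have h' : m + (m - k) = k + 2 * (m - k) := by omega
        rw [h', pow_add, pow_mul]; simp
      show (-1 : R) ^ k * ((2 * m).choose k : R) * u k
          = (aa m (m - k) : R) * u (m - (m - k))
      simp only [aa]
      push_cast
      rw [hmm, hch, hsgn]
  have hsplit : ∑ k ∈ range (2 * m + 1), (-1 : R) ^ k * ((2 * m).choose k : R) * u k
      = (∑ k ∈ Ico 0 m, (-1 : R) ^ k * ((2 * m).choose k : R) * u k)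
        + ((-1 : R) ^ m * ((2 * m).choose m : R) * u m
          + ∑ k ∈ Ico (m + 1) (2 * m + 1), (-1 : R) ^ k * ((2 * m).choose k : R) * u k) := by
    rw [range_eq_Ico, ← Finset.sum_Ico_consecutive _ (Nat.zero_le m) (by omega : m ≤ 2 * m + 1),
      Finset.sum_eq_sum_Ico_succ_bot (by omega : m < 2 * m + 1)]
  rw [hsplit, h1, h2]
  simp only [mul_add, Finset.sum_add_distrib]
  ring

open Finset in
/-- The constant-term identity. -/
lemma const_identity (m : ℕ) (hm : 1 ≤ m) :
    (-1 : ℤ) ^ m * ((2 * m).choose m : ℤ) = - 2 * ∑ j ∈ Icc 1 m, aa m j := by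
  have h0 : (∑ k ∈ range (2 * m + 1), ((-1 : ℤ) ^ k * ((2 * m).choose k : ℤ))) = 0 :=
    Int.alternating_sum_range_choose_of_ne (by omega)
  have h1 := split_sum (R := ℤ) m hm (fun _ => 1)
  simp only [mul_one] at h1
  rw [h1] at h0
  simp only [Int.cast_id] at h0
  have h2 : (∑ j ∈ Icc 1 m, aa m j * (1 + 1)) = (∑ j ∈ Icc 1 m, aa m j) * 2 := by
    rw [← Finset.sum_mul]; norm_num
  rw [h2] at h0
  linarith

open Finset in
/-- Key algebraic identity. -/
lemma keyC (m : ℕ) (hm : 1 ≤ m) (x : ℂ) (hx : x ≠ 0) :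
    (x + x⁻¹ - 2) ^ m
      = ∑ j ∈ Icc 1 m, (aa m j : ℂ) * (x ^ j + (x⁻¹) ^ j - 2) := by
  have hxm : x ^ m ≠ 0 := pow_ne_zero m hx
  apply mul_left_cancel₀ hxm
  have hlhs : x ^ m * (x + x⁻¹ - 2) ^ m = (x - 1) ^ (2 * m) := by
    rw [← mul_pow]
    have : x * (x + x⁻¹ - 2) = (x - 1) ^ 2 := by field_simp; ring
    rw [this, ← pow_mul, mul_comm 2 m, mul_comm m 2]
  rw [hlhs]
  have hbin : (x - 1) ^ (2 * m)
      = ∑ k ∈ range (2 * m + 1), (-1 : ℂ) ^ k * ((2 * m).choose k : ℂ) * x ^ k := by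
    rw [sub_pow]
    refine Finset.sum_congr rfl fun k hk => ?_
    have : (-1 : ℂ) ^ (k + 2 * m) = (-1 : ℂ) ^ k := by
      rw [pow_add, pow_mul]; simp
    rw [this, one_pow]
    ring
  have hc := congrArg (fun z : ℤ => (z : ℂ)) (const_identity m hm)
  push_cast at hc
  rw [hbin, split_sum m hm (fun k => x ^ k), hc]
  rw [Finset.mul_sum, Finset.mul_sum, Finset.sum_mul, ← Finset.sum_add_distrib]
  refine Finset.sum_congr rfl fun j hj => ?_
  simp only [mem_Icc] at hj
  have hxj : x ^ m * (x⁻¹) ^ j = x ^ (m - j) := by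
    have h' : x ^ m = x ^ (m - j) * x ^ j := by rw [← pow_add]; congr 1; omega
    rw [h', mul_assoc, ← mul_pow, mul_inv_cancel₀ hx, one_pow, mul_one]
  rw [pow_add, ← hxj]
  ring

lemma summable_c (n : ℤ) : Summable (fun l : ℕ => e ((n : ℂ) / 2 ^ (l + 1)) - 1) := by
  have habs : ∀ l : ℕ, ‖(2 * (Real.pi : ℂ) * Complex.I * ((n : ℂ) / 2 ^ (l + 1)))‖
      = 2 * Real.pi * |(n : ℝ)| / 2 ^ (l + 1) := by
    intro l
    simp only [norm_mul, Complex.norm_I, Complex.norm_ofNat, Complex.norm_real,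
      norm_div, Complex.norm_intCast, norm_pow]
    rw [Real.norm_of_nonneg Real.pi_pos.le]
    simp [abs_of_nonneg, div_eq_mul_inv]
    ring
  obtain ⟨N, hN⟩ : ∃ N : ℕ, 2 * Real.pi * |(n : ℝ)| < 2 ^ N := by
    rcases pow_unbounded_of_one_lt (2 * Real.pi * |(n : ℝ)|) (one_lt_two (α := ℝ)) with ⟨N, hN⟩
    exact ⟨N, hN⟩
  apply Summable.of_norm_bounded_eventually_nat
    (g := fun l => (2 * (2 * Real.pi * |(n : ℝ)|)) * (1 / 2) ^ l)
  · exact (summable_geometric_of_lt_one (by norm_num) (by norm_num)).mul_left _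
  · filter_upwards [Filter.eventually_ge_atTop N] with l hl
    have hle : 2 * Real.pi * |(n : ℝ)| ≤ 2 ^ (l + 1) := by
      calc 2 * Real.pi * |(n : ℝ)| ≤ 2 ^ N := hN.le
        _ ≤ 2 ^ (l + 1) := by
            apply pow_le_pow_right₀ (by norm_num) (by omega)
    have harg : ‖(2 * (Real.pi : ℂ) * Complex.I * ((n : ℂ) / 2 ^ (l + 1)))‖ ≤ 1 := by
      rw [habs]
      rw [div_le_one (by positivity)]
      simpa using hle
    have := Complex.norm_exp_sub_one_le (x := 2 * (Real.pi : ℂ) * Complex.I * ((n : ℂ) / 2 ^ (l + 1))) harg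
    simp only [e]
    calc ‖Complex.exp (2 * (Real.pi : ℂ) * Complex.I * ((n : ℂ) / 2 ^ (l + 1))) - 1‖
        ≤ 2 * ‖(2 * (Real.pi : ℂ) * Complex.I * ((n : ℂ) / 2 ^ (l + 1)))‖ := this
      _ = 2 * (2 * Real.pi * |(n : ℝ)| / 2 ^ (l + 1)) := by rw [habs]
      _ = (2 * Real.pi * |(n : ℝ)|) * (1 / 2) ^ l := by
          rw [pow_succ, div_pow, one_pow]
          have h2 : (2 : ℝ) ^ l ≠ 0 := by positivity
          field_simp
      _ ≤ 2 * (2 * Real.pi * |(n : ℝ)|) * (1 / 2) ^ l := by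
          have hnn : (0:ℝ) ≤ (2 * Real.pi * |(n : ℝ)|) * (1 / 2) ^ l := by positivity
          nlinarith

lemma e_neg (w : ℂ) : e (-w) = (e w)⁻¹ := by
  rw [e, e, ← Complex.exp_neg]
  congr 1
  ring

lemma e_ne_zero (w : ℂ) : e w ≠ 0 := Complex.exp_ne_zero _

lemma e_pow (w : ℂ) (j : ℕ) : (e w) ^ j = e (j * w) := by
  rw [e, e, ← Complex.exp_nat_mul]
  congr 1
  ring

open Finset in
/-- For every `m ≥ 1`, `σ(m)` is an integer linear combination of `σ_1, …, σ_m`. -/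
theorem σbig_integer_combination (m : ℕ) (hm : 1 ≤ m) :
    ∃ a : ℕ → ℤ, σbig m = ∑ j ∈ Finset.Icc 1 m, (a j : ℂ) * σ (j : ℤ) := by
  refine ⟨aa m, ?_⟩
  have hterm : ∀ l : ℕ, (e (1 / 2 ^ (l + 1)) + e (-(1 / 2 ^ (l + 1))) - 2) ^ m
      = ∑ j ∈ Icc 1 m, (aa m j : ℂ)
          * ((e (((j : ℤ) : ℂ) / 2 ^ (l + 1)) - 1) + (e (((-j : ℤ) : ℂ) / 2 ^ (l + 1)) - 1)) := by
    intro l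
    rw [e_neg, keyC m hm _ (e_ne_zero _)]
    refine Finset.sum_congr rfl fun j hj => ?_
    congr 1
    have h1 : e (1 / 2 ^ (l + 1)) ^ j = e (((j : ℤ) : ℂ) / 2 ^ (l + 1)) := by
      rw [e_pow]; push_cast; ring_nf
    have h2 : ((e (1 / 2 ^ (l + 1)))⁻¹) ^ j = e (((-j : ℤ) : ℂ) / 2 ^ (l + 1)) := by
      rw [← e_neg, e_pow]; push_cast; ring_nf
    rw [h1, h2]
    ring
  have hsummand : ∀ j ∈ Icc 1 m, Summable (fun l : ℕ => (aa m j : ℂ)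
      * ((e (((j : ℤ) : ℂ) / 2 ^ (l + 1)) - 1) + (e (((-j : ℤ) : ℂ) / 2 ^ (l + 1)) - 1))) := by
    intro j _
    exact (((summable_c (j : ℤ)).add (summable_c (-(j : ℤ))))).mul_left _
  calc σbig m
      = ∑' l : ℕ, ∑ j ∈ Icc 1 m, (aa m j : ℂ)
          * ((e (((j : ℤ) : ℂ) / 2 ^ (l + 1)) - 1) + (e (((-j : ℤ) : ℂ) / 2 ^ (l + 1)) - 1)) := by
        rw [σbig]; exact tsum_congr hterm
    _ = ∑ j ∈ Icc 1 m, ∑' l : ℕ, (aa m j : ℂ)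
          * ((e (((j : ℤ) : ℂ) / 2 ^ (l + 1)) - 1) + (e (((-j : ℤ) : ℂ) / 2 ^ (l + 1)) - 1)) :=
        Summable.tsum_finsetSum hsummand
    _ = ∑ j ∈ Icc 1 m, (aa m j : ℂ) * σ (j : ℤ) := by
        refine Finset.sum_congr rfl fun j hj => ?_
        rw [tsum_mul_left]
        congr 1
        rw [σ, c, c, ← Summable.tsum_add (summable_c (j : ℤ)) (summable_c (-(j : ℤ)))]
end

section
/- The additive subsemigroup Γ of ℝ generated by ℤ together with the numbers σ_m (m ≥ 1) is dense in ℝ: the closure of the set of all finite sums of elements of ℤ ∪ {σ_m : m ≥ 1} is all of ℝ. -/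
/-- `σ_m = c_m + c_{−m}`, viewed as a real number (it is real since `c_{−m} = conj c_m`). -/
noncomputable def σR (m : ℤ) : ℝ := (c m + c (-m)).re

namespace SigmaDense

open Real Filter Finset

/-- The basic angle `θ l = π / 2^l`. -/
noncomputable def θ (l : ℕ) : ℝ := π / 2 ^ l

lemma θ_pos (l : ℕ) : 0 < θ l := div_pos Real.pi_pos (by positivity)

lemma θ_eq (l : ℕ) : θ l = π * (1/2) ^ l := by rw [θ, div_pow, one_pow]; ring

lemma θ_le_pi (l : ℕ) : θ l ≤ π := by
  rw [θ_eq]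
  nlinarith [Real.pi_pos, pow_le_one₀ (by norm_num : (0:ℝ) ≤ 1/2) (by norm_num : (1:ℝ)/2 ≤ 1) (n := l),
    pow_pos (by norm_num : (0:ℝ) < 1/2) l]

lemma θ_add (j k : ℕ) : θ (j + k) = θ j * (1/2) ^ k := by rw [θ_eq, θ_eq, pow_add]; ring

/-- The real term of the sigma series. -/
noncomputable def g (m : ℤ) (l : ℕ) : ℝ := 2 * Real.cos ((m : ℝ) * θ l) - 2

/-- The complex term rewritten as `exp(x * I)` with real `x`. -/
lemma cterm_eq (m : ℤ) (l : ℕ) :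
    e ((m : ℂ) / 2 ^ (l + 1)) - 1
      = Complex.exp ((((m : ℝ) * θ l : ℝ) : ℂ) * Complex.I) - 1 := by
  unfold e θ
  congr 2
  push_cast
  rw [pow_succ]
  field_simp

lemma summable_cterm (m : ℤ) :
    Summable (fun l : ℕ => e ((m : ℂ) / 2 ^ (l + 1)) - 1) := by
  simp only [cterm_eq]
  apply Summable.of_norm_bounded_eventually_nat (g := fun l => (2 * |(m:ℝ)| * π) * (1/2)^l)
    (by apply Summable.mul_left; exact summable_geometric_of_lt_one (by norm_num) (by norm_num))
  have hto : Filter.Tendsto (fun l : ℕ => |(m:ℝ)| * θ l) Filter.atTop (nhds 0) := by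
    have h1 : Filter.Tendsto (fun l : ℕ => ((1:ℝ)/2) ^ l) Filter.atTop (nhds 0) :=
      tendsto_pow_atTop_nhds_zero_of_lt_one (by norm_num) (by norm_num)
    have h2 : (fun l : ℕ => |(m:ℝ)| * θ l) = fun l => (|(m:ℝ)| * π) * (1/2)^l := by
      funext l; rw [θ_eq]; ring
    rw [h2]
    simpa using h1.const_mul (|(m:ℝ)| * π)
  have hev : ∀ᶠ l in Filter.atTop, |(m:ℝ)| * θ l ≤ 1 := by
    have := hto.eventually_le_const (show (0:ℝ) < 1 by norm_num)
    simpa using this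
  filter_upwards [hev] with l hl
  have hθ := θ_pos l
  have habs : ‖(((m : ℝ) * θ l : ℝ) : ℂ) * Complex.I‖ = |(m:ℝ)| * θ l := by
    rw [norm_mul, Complex.norm_I, Complex.norm_real, Real.norm_eq_abs, abs_mul, abs_of_pos hθ, mul_one]
  have hle := Complex.norm_exp_sub_one_le (x := (((m : ℝ) * θ l : ℝ) : ℂ) * Complex.I)
    (by rw [habs]; exact hl)
  rw [habs] at hle
  calc ‖Complex.exp ((((m : ℝ) * θ l : ℝ) : ℂ) * Complex.I) - 1‖
      ≤ 2 * (|(m:ℝ)| * θ l) := hle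
    _ = 2 * |(m:ℝ)| * π * (1/2)^l := by rw [θ_eq]; ring

lemma summable_g (m : ℤ) : Summable (g m) := by
  apply Summable.of_norm_bounded (g := fun l => ((m:ℝ)*π)^2 * (1/4)^l)
    (by apply Summable.mul_left; exact summable_geometric_of_lt_one (by norm_num) (by norm_num))
  intro l
  have h1 : 1 - ((m:ℝ) * θ l)^2/2 ≤ Real.cos ((m:ℝ) * θ l) := Real.one_sub_sq_div_two_le_cos
  have h2 : Real.cos ((m:ℝ) * θ l) ≤ 1 := Real.cos_le_one _
  have h3 : ((m:ℝ) * θ l)^2 = ((m:ℝ)*π)^2 * (1/4)^l := by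
    rw [θ_eq]
    rw [show ((1:ℝ)/4) = (1/2)^2 by norm_num, ← pow_right_comm]
    ring
  rw [Real.norm_eq_abs, abs_le]
  constructor <;> simp only [g] <;> nlinarith [sq_nonneg ((m:ℝ)*θ l)]

lemma sigma_eq (m : ℤ) : σR m = ∑' l : ℕ, g m l := by
  unfold σR c
  rw [← Summable.tsum_add (summable_cterm m) (summable_cterm (-m)),
    Complex.re_tsum ((summable_cterm m).add (summable_cterm (-m)))]
  apply tsum_congr
  intro l
  rw [cterm_eq m, cterm_eq (-m)]
  have : (((-m : ℤ):ℝ) * θ l) = -(((m:ℤ):ℝ) * θ l) := by push_cast; ring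
  rw [this]
  have e1 := Complex.exp_ofReal_mul_I_re (((m:ℤ):ℝ) * θ l)
  have e2 := Complex.exp_ofReal_mul_I_re (-(((m:ℤ):ℝ) * θ l))
  simp only [Complex.add_re, Complex.sub_re, Complex.one_re, e1, e2, Real.cos_neg, g]
  ring

lemma g_periodic (k : ℕ) (l : ℕ) (hl : l < k) : g (1 + 2 ^ k) l = g 1 l := by
  obtain ⟨d, rfl⟩ : ∃ d, k = (l + 1) + d := ⟨k - (l+1), by omega⟩
  unfold g
  have hangle : ((1 + 2 ^ (l + 1 + d) : ℤ) : ℝ) * θ l = (1:ℤ) * θ l + (2^d : ℤ) * (2 * π) := by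
    push_cast
    rw [θ]
    have h2 : (2:ℝ) ^ (l + 1 + d) = 2 ^ l * (2 * 2 ^ d) := by rw [pow_add, pow_add]; ring
    field_simp [h2]
    ring
  rw [hangle, Real.cos_add_int_mul_two_pi]

/-- The deviation from additivity. -/
noncomputable def h (k j : ℕ) : ℝ := g (1 + 2 ^ k) (j + k) - g 1 (j + k) - g 1 j

lemma summable_shift (m : ℤ) (k : ℕ) : Summable (fun j : ℕ => g m (j + k)) :=
  (summable_nat_add_iff k).2 (summable_g m)

lemma summable_h (k : ℕ) : Summable (h k) :=
  ((summable_shift _ k).sub (summable_shift 1 k)).sub (summable_g 1)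

lemma f_eq (k : ℕ) : σR (1 + 2 ^ k) - 2 * σR 1 = ∑' j : ℕ, h k j := by
  have T : ∑' j : ℕ, h k j
      = (∑' j : ℕ, g (1 + 2 ^ k) (j + k)) - (∑' j : ℕ, g 1 (j + k)) - ∑' j : ℕ, g 1 j := by
    rw [← Summable.tsum_sub (summable_shift _ k) (summable_shift 1 k),
      ← Summable.tsum_sub ((summable_shift _ k).sub (summable_shift 1 k)) (summable_g 1)]
    rfl
  have S1 := Summable.sum_add_tsum_nat_add (f := g (1 + 2 ^ k)) k (summable_g _)
  have S2 := Summable.sum_add_tsum_nat_add (f := g 1) k (summable_g 1)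
  have hrange : ∑ l ∈ Finset.range k, g (1 + 2 ^ k) l = ∑ l ∈ Finset.range k, g 1 l :=
    Finset.sum_congr rfl (fun l hl => g_periodic k l (Finset.mem_range.1 hl))
  rw [T, sigma_eq (1 + 2^k), sigma_eq 1]
  rw [← S1, ← S2, hrange]
  ring

lemma h_eq (k j : ℕ) :
    h k j = 2 * Real.cos (θ j + θ (j + k)) - 2 * Real.cos (θ (j + k))
      - 2 * Real.cos (θ j) + 2 := by
  unfold h g
  have hangle : ((1 + 2 ^ k : ℤ) : ℝ) * θ (j + k) = θ j + θ (j + k) := by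
    push_cast
    rw [θ, θ]
    have h2 : (2:ℝ) ^ (j + k) = 2 ^ j * 2 ^ k := pow_add 2 j k
    field_simp [h2]
    ring
  rw [hangle]
  push_cast
  ring

lemma key_upper {a b : ℝ} (ha : 0 ≤ a) (ha' : a ≤ π) (hb : 0 ≤ b) (hb' : b ≤ π) :
    2 * Real.cos (a + b) - 2 * Real.cos b - 2 * Real.cos a + 2 ≤ a ^ 2 * b ^ 2 / 2 := by
  rw [Real.cos_add]
  have h1 : 1 - a^2/2 ≤ Real.cos a := Real.one_sub_sq_div_two_le_cos
  have h2 : 1 - b^2/2 ≤ Real.cos b := Real.one_sub_sq_div_two_le_cos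
  have h3 : Real.cos a ≤ 1 := Real.cos_le_one a
  have h4 : Real.cos b ≤ 1 := Real.cos_le_one b
  have h5 : 0 ≤ Real.sin a := Real.sin_nonneg_of_nonneg_of_le_pi ha ha'
  have h6 : 0 ≤ Real.sin b := Real.sin_nonneg_of_nonneg_of_le_pi hb hb'
  nlinarith [mul_nonneg h5 h6, mul_le_mul h1 h2, sq_nonneg a, sq_nonneg b,
    mul_nonneg (mul_nonneg ha hb) hb, mul_nonneg (mul_nonneg ha ha) hb,
    mul_nonneg (sub_nonneg.2 h3) (sub_nonneg.2 h4)]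

lemma key_abs {a b : ℝ} (ha : 0 ≤ a) (ha' : a ≤ π) (hb : 0 ≤ b) (hb' : b ≤ π) :
    |2 * Real.cos (a + b) - 2 * Real.cos b - 2 * Real.cos a + 2|
      ≤ a ^ 2 * b ^ 2 / 2 + 2 * (a * b) := by
  have h1 : 1 - a^2/2 ≤ Real.cos a := Real.one_sub_sq_div_two_le_cos
  have h2 : 1 - b^2/2 ≤ Real.cos b := Real.one_sub_sq_div_two_le_cos
  have h3 : Real.cos a ≤ 1 := Real.cos_le_one a
  have h4 : Real.cos b ≤ 1 := Real.cos_le_one b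
  have h5 : |Real.sin a| ≤ |a| := Real.abs_sin_le_abs
  have h6 : |Real.sin b| ≤ |b| := Real.abs_sin_le_abs
  rw [abs_of_nonneg ha] at h5
  rw [abs_of_nonneg hb] at h6
  have h7 := abs_nonneg (Real.sin a)
  have h8 := abs_nonneg (Real.sin b)
  have h9 := neg_abs_le (Real.sin a)
  have h10 := neg_abs_le (Real.sin b)
  have h11 := le_abs_self (Real.sin a)
  have h12 := le_abs_self (Real.sin b)
  rw [Real.cos_add, abs_le]
  constructor
  · nlinarith [mul_le_mul h5 h6 h8 ha, mul_nonneg (sub_nonneg.2 h3) (sub_nonneg.2 h4),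
      mul_nonneg ha hb]
  · nlinarith [mul_le_mul h5 h6 h8 ha, mul_le_mul h1 h2, sq_nonneg a, sq_nonneg b,
      mul_nonneg ha hb, mul_nonneg (sub_nonneg.2 h3) (sub_nonneg.2 h4)]

lemma h_abs_le (k j : ℕ) : |h k j| ≤ (π ^ 4 / 2 + 2 * π ^ 2) * (1/2) ^ k * (1/4) ^ j := by
  rw [h_eq]
  have hb := key_abs (le_of_lt (θ_pos j)) (θ_le_pi j) (le_of_lt (θ_pos (j+k))) (θ_le_pi (j+k))
  refine hb.trans ?_
  have e1 : θ (j + k) = θ j * (1/2)^k := θ_add j k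
  have e2 : θ j = π * (1/2)^j := θ_eq j
  have hp : (0:ℝ) < (1/2:ℝ)^j := by positivity
  have hq : (0:ℝ) < (1/2:ℝ)^k := by positivity
  have hp1 : ((1:ℝ)/2)^j ≤ 1 := pow_le_one₀ (by norm_num) (by norm_num)
  have hq1 : ((1:ℝ)/2)^k ≤ 1 := pow_le_one₀ (by norm_num) (by norm_num)
  have h4 : ((1:ℝ)/4)^j = ((1/2:ℝ)^j)^2 := by
    rw [← pow_mul, pow_mul']; norm_num
  rw [e1, e2, h4]
  have hpi := Real.pi_pos
  have hx0 : (0:ℝ) ≤ ((1/2:ℝ)^j)^2*((1/2:ℝ)^k) := by positivity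
  have hx1 : ((1/2:ℝ)^j)^2*((1/2:ℝ)^k) ≤ 1 := by nlinarith
  have key : (((1/2:ℝ)^j)^2*((1/2:ℝ)^k))*(((1/2:ℝ)^j)^2*((1/2:ℝ)^k)) ≤ ((1/2:ℝ)^j)^2*((1/2:ℝ)^k) := by
    nlinarith
  have key2 := mul_le_mul_of_nonneg_left key (by positivity : (0:ℝ) ≤ π^4/2)
  nlinarith [key2, mul_le_mul_of_nonneg_left key (by positivity : (0:ℝ) ≤ 2*π^2)]

lemma summable_habs (k : ℕ) : Summable (fun j : ℕ => |h k j|) :=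
  (summable_h k).abs

lemma summable_bound (k : ℕ) :
    Summable (fun j : ℕ => (π ^ 4 / 2 + 2 * π ^ 2) * (1/2) ^ k * (1/4) ^ j) := by
  apply Summable.mul_left
  exact summable_geometric_of_lt_one (by norm_num) (by norm_num)

lemma tsum_quarter : ∑' j : ℕ, ((1:ℝ)/4) ^ j = 4/3 := by
  rw [tsum_geometric_of_lt_one (by norm_num) (by norm_num)]
  norm_num

lemma f_abs_le (k : ℕ) : |σR (1 + 2 ^ k) - 2 * σR 1| ≤ 100 * (1/2) ^ k := by
  rw [f_eq]
  have h1 : |∑' j : ℕ, h k j| ≤ ∑' j : ℕ, |h k j| := by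
    simpa using norm_tsum_le_tsum_norm (f := h k) ((summable_h k).abs.congr (by simp))
  refine h1.trans ?_
  have h2 : ∑' j : ℕ, |h k j| ≤ ∑' j : ℕ, (π ^ 4 / 2 + 2 * π ^ 2) * (1/2) ^ k * (1/4) ^ j :=
    Summable.tsum_le_tsum (h_abs_le k) (summable_habs k) (summable_bound k)
  refine h2.trans ?_
  rw [tsum_mul_left, tsum_quarter]
  have hq : (0:ℝ) < (1/2:ℝ)^k := by positivity
  have hpi2 : π^2 ≤ 9.9225 := by nlinarith [Real.pi_lt_d2, Real.pi_pos]
  have hpi4 : π^4 ≤ 98.46 := by nlinarith [hpi2, Real.pi_pos, sq_nonneg π]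
  have hC : π ^ 4 / 2 + 2 * π ^ 2 ≤ 75 := by nlinarith
  nlinarith [mul_le_mul_of_nonneg_right hC hq.le]

set_option maxHeartbeats 2000000 in
lemma f_neg (k : ℕ) (hk : 6 ≤ k) : σR (1 + 2 ^ k) - 2 * σR 1 < 0 := by
  rw [f_eq]
  have split := Summable.sum_add_tsum_nat_add (f := h k) 2 (summable_h k)
  rw [← split]
  rw [Finset.sum_range_succ, Finset.sum_range_one]
  set q : ℝ := (1/2) ^ k with hqdef
  have hq0 : 0 < q := by positivity
  have hq64 : q ≤ 1/64 := by
    rw [hqdef]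
    calc ((1:ℝ)/2)^k ≤ (1/2)^6 := pow_le_pow_of_le_one (by norm_num) (by norm_num) hk
      _ = 1/64 := by norm_num
  have hpi := Real.pi_pos
  have hpi2 : π^2 ≤ 9.9225 := by nlinarith [Real.pi_lt_d2]
  have hpi4 : π^4 ≤ 98.46 := by nlinarith [sq_nonneg π]
  have hθ0 : θ 0 = π := by simp [θ]
  have hθ1 : θ 1 = π/2 := by norm_num [θ]
  have hθ0k : θ (0 + k) = π * q := by rw [θ_add, hθ0]
  have hθ1k : θ (1 + k) = π/2 * q := by rw [θ_add, hθ1]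
  have hb0 : h k 0 ≤ π^4 * q^2 / 2 := by
    rw [h_eq]
    have := key_upper (le_of_lt (θ_pos 0)) (θ_le_pi 0) (le_of_lt (θ_pos (0+k))) (θ_le_pi (0+k))
    rw [hθ0, hθ0k] at this ⊢
    nlinarith [this]
  have hb1 : h k 1 ≤ (π/2*q)^2 - (4/π) * (π/2*q) := by
    rw [h_eq, hθ1, hθ1k]
    have hbpos := θ_pos (1+k)
    rw [hθ1k] at hbpos
    have hble : π/2*q ≤ π/2 := by nlinarith
    have hsin : 2/π * (π/2*q) ≤ Real.sin (π/2*q) := Real.mul_le_sin (le_of_lt hbpos) hble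
    have hcos : 1 - (π/2*q)^2/2 ≤ Real.cos (π/2*q) := Real.one_sub_sq_div_two_le_cos
    have hexp : Real.cos (π/2 + π/2*q) = - Real.sin (π/2*q) := by
      rw [Real.cos_add, Real.cos_pi_div_two, Real.sin_pi_div_two]; ring
    rw [hexp, Real.cos_pi_div_two]
    have h4pi : (4/π) * (π/2*q) = 2 * (2/π * (π/2*q)) := by ring
    nlinarith [hsin, hcos]
  have htail : ∑' j : ℕ, h k (j + 2) ≤ π^4 * q^2 / 384 := by
    have hptw : ∀ j : ℕ, h k (j + 2) ≤ (π^4 * q^2 / 512) * (1/4)^j := by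
      intro j
      rw [h_eq]
      have hku := key_upper (le_of_lt (θ_pos (j+2))) (θ_le_pi (j+2))
        (le_of_lt (θ_pos (j+2+k))) (θ_le_pi (j+2+k))
      refine hku.trans ?_
      rw [θ_add (j+2) k, θ_eq (j+2)]
      have hchain : ((1/2:ℝ)^(j+2))^4 ≤ (1/4:ℝ)^j * (1/256) := by
        have p1 : ((1/2:ℝ)^(j+2))^4 = (1/2:ℝ)^((j+2)*4) := by rw [← pow_mul]
        have p2 : (1/4:ℝ)^j * (1/256) = (1/2:ℝ)^(2*j+8) := by
          have : ((1:ℝ)/4)^j = (1/2:ℝ)^(2*j) := by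
            rw [pow_mul]; norm_num
          rw [this, pow_add]
          norm_num
        rw [p1, p2]
        exact pow_le_pow_of_le_one (by norm_num) (by norm_num) (by omega)
      have := mul_le_mul_of_nonneg_left hchain (by positivity : (0:ℝ) ≤ π^4*q^2/2)
      nlinarith [this]
    have hsum2 : Summable (fun j : ℕ => h k (j + 2)) := (summable_nat_add_iff 2).2 (summable_h k)
    have hsumb : Summable (fun j : ℕ => (π^4 * q^2 / 512) * (1/4:ℝ)^j) :=
      Summable.mul_left _ (summable_geometric_of_lt_one (by norm_num) (by norm_num))
    have := Summable.tsum_le_tsum hptw hsum2 hsumb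
    refine this.trans ?_
    rw [tsum_mul_left, tsum_quarter]
    exact le_of_eq (by ring)
  have hq2 : q^2 ≤ q/64 := by nlinarith
  have hb1' : h k 1 ≤ π^2*q^2/4 - 2*q := by
    have h4 : 4/π*(π/2*q) = 2*q := by field_simp; ring
    nlinarith [hb1]
  linarith [hb0, hb1', htail, mul_le_mul_of_nonneg_right hpi4 (sq_nonneg q),
    mul_le_mul_of_nonneg_right hpi2 (sq_nonneg q), hq0, hq64, hq2]

abbrev genSet : Set ℝ :=
  Set.range ((↑) : ℤ → ℝ) ∪ {x : ℝ | ∃ m : ℤ, 1 ≤ m ∧ x = σR m}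

abbrev S : AddSubsemigroup ℝ := AddSubsemigroup.closure genSet

lemma int_mem (n : ℤ) : (n : ℝ) ∈ S :=
  AddSubsemigroup.subset_closure (Or.inl ⟨n, rfl⟩)

lemma sigma_mem {m : ℤ} (hm : 1 ≤ m) : σR m ∈ S :=
  AddSubsemigroup.subset_closure (Or.inr ⟨m, hm, rfl⟩)

lemma nsmul_mem_S {x : ℝ} (hx : x ∈ S) : ∀ n : ℕ, ((n + 1 : ℕ) : ℝ) * x ∈ S := by
  intro n
  induction n with
  | zero => simpa using hx
  | succ n ih =>
      have : ((n + 1 + 1 : ℕ) : ℝ) * x = ((n + 1 : ℕ) : ℝ) * x + x := by push_cast; ring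
      rw [this]
      exact S.add_mem ih hx

lemma pos_int_smul_mem {x : ℝ} (hx : x ∈ S) {k : ℤ} (hk : 0 < k) : (k : ℝ) * x ∈ S := by
  obtain ⟨n, hn⟩ : ∃ n : ℕ, k = (n : ℤ) + 1 := ⟨(k - 1).toNat, by omega⟩
  have hcast : (k : ℝ) = ((n + 1 : ℕ) : ℝ) := by rw [hn]; push_cast; ring
  rw [hcast]
  exact nsmul_mem_S hx n

lemma small_mem {ε : ℝ} (hε : 0 < ε) : ∃ t : ℝ, t ∈ S ∧ t ≠ 0 ∧ |t| < ε := by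
  by_cases hirr : Irrational (σR 1)
  · obtain ⟨n, hn⟩ := exists_nat_gt (1/ε)
    have hnpos : 0 < n := by
      rcases Nat.eq_zero_or_pos n with h0 | h
      · exfalso; rw [h0] at hn; norm_num at hn; linarith [one_div_pos.2 hε]
      · exact h
    obtain ⟨j, k, hk0, hkn, hjk⟩ := Real.exists_int_int_abs_mul_sub_le (σR 1) hnpos
    refine ⟨(k : ℝ) * σR 1 + ((-j : ℤ) : ℝ),
      S.add_mem (pos_int_smul_mem (sigma_mem (le_refl 1)) hk0) (int_mem _), ?_, ?_⟩
    · intro h0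
      have hkne : (k : ℝ) ≠ 0 := Int.cast_ne_zero.2 (by omega)
      have : σR 1 = (j : ℝ) / (k : ℝ) := by
        push_cast at h0 ⊢
        field_simp
        linarith
      exact (irrational_iff_ne_rational _).1 hirr j k (by omega) this
    · have h1 : (1:ℝ) / (n + 1) < ε := by
        rw [div_lt_iff₀ (by positivity)]
        have := (div_lt_iff₀ hε).1 hn
        nlinarith
      have : |(k : ℝ) * σR 1 + ((-j : ℤ) : ℝ)| = |(k : ℝ) * σR 1 - (j:ℝ)| := by
        push_cast; ring_nf
      rw [this]
      exact lt_of_le_of_lt hjk h1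
  · rw [Irrational] at hirr
    push_neg at hirr
    obtain ⟨r, hr⟩ := hirr
    have hden : (0:ℝ) < (r.den : ℝ) := by exact_mod_cast r.pos
    have hnum : ((r.den : ℤ) : ℝ) * σR 1 = ((r.num : ℤ) : ℝ) := by
      rw [← hr, Rat.cast_def]
      field_simp
      push_cast; ring
    obtain ⟨n, hplt⟩ := exists_pow_lt_of_lt_one
      (show (0:ℝ) < ε / (100 * r.den) by positivity) (show (1:ℝ)/2 < 1 by norm_num)
    set k : ℕ := max n 6 with hkdef
    have hk6 : 6 ≤ k := le_max_right _ _
    have hkn : ((1:ℝ)/2) ^ k ≤ (1/2) ^ n :=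
      pow_le_pow_of_le_one (by norm_num) (by norm_num) (le_max_left _ _)
    set F : ℝ := σR (1 + 2 ^ k) - 2 * σR 1 with hF
    have hFneg : F < 0 := f_neg k hk6
    have hFabs : |F| ≤ 100 * (1/2) ^ k := f_abs_le k
    have hmem : ((r.den : ℤ) : ℝ) * σR (1 + 2 ^ k) + ((-2 * r.num : ℤ) : ℝ) ∈ S := by
      refine S.add_mem (pos_int_smul_mem (sigma_mem ?_) ?_) (int_mem _)
      · have : (0:ℤ) < 2 ^ k := by positivity
        omega
      · exact_mod_cast r.pos
    have hval : ((r.den : ℤ) : ℝ) * σR (1 + 2 ^ k) + ((-2 * r.num : ℤ) : ℝ)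
        = (r.den : ℝ) * F := by
      have h2 : σR (1 + 2 ^ k) = F + 2 * σR 1 := by rw [hF]; ring
      push_cast [h2]
      push_cast at hnum
      linarith [hnum]
    refine ⟨_, hmem, ?_, ?_⟩
    · rw [hval]
      exact ne_of_lt (mul_neg_of_pos_of_neg hden hFneg)
    · rw [hval, abs_mul, abs_of_pos hden]
      calc (r.den : ℝ) * |F| ≤ (r.den : ℝ) * (100 * (1/2) ^ k) :=
            mul_le_mul_of_nonneg_left hFabs hden.le
        _ ≤ (r.den : ℝ) * (100 * (1/2) ^ n) := by
            apply mul_le_mul_of_nonneg_left _ hden.le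
            nlinarith
        _ < ε := by
            rw [lt_div_iff₀ (by positivity : (0:ℝ) < 100 * r.den)] at hplt
            nlinarith

end SigmaDense

open SigmaDense in
/-- The additive subsemigroup of `ℝ` generated by `ℤ` together with the numbers
`σ_m` (`m ≥ 1`) is dense in `ℝ`. -/
theorem semigroup_generated_by_ints_and_sigma_dense :
    Dense (AddSubsemigroup.closure
      (Set.range ((↑) : ℤ → ℝ) ∪ {x : ℝ | ∃ m : ℤ, 1 ≤ m ∧ x = σR m}) : Set ℝ) := by
  rw [Metric.dense_iff]
  intro x r hr
  have hε : 0 < min r 1 := lt_min hr one_pos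
  obtain ⟨t, htS, htne, htlt⟩ := small_mem hε
  have htr : |t| < r := lt_of_lt_of_le htlt (min_le_left _ _)
  have ht1 : |t| < 1 := lt_of_lt_of_le htlt (min_le_right _ _)
  rcases lt_or_gt_of_ne htne with htneg | htpos
  · -- t < 0
    set u : ℝ := -t with hu
    have hu0 : 0 < u := by simp [hu]; linarith
    have hu1 : u < 1 := by rw [hu]; rw [abs_of_neg htneg] at ht1; linarith
    set n : ℤ := ⌈x⌉ + 1 with hn
    have hnx : x + 1 ≤ (n : ℝ) := by
      push_cast [hn]
      linarith [Int.le_ceil x]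
    set kk : ℤ := ⌊((n : ℝ) - x) / u⌋ with hkk
    have hk1 : 1 ≤ kk := by
      rw [hkk]
      rw [Int.le_floor]
      rw [le_div_iff₀ hu0]
      push_cast
      linarith
    have hfl := Int.floor_le (((n : ℝ) - x) / u)
    have hfu := Int.lt_floor_add_one (((n : ℝ) - x) / u)
    rw [← hkk] at hfl hfu
    have hkle : (kk : ℝ) * u ≤ (n : ℝ) - x := by
      rw [← le_div_iff₀ hu0]; exact hfl
    have hkgt : (n : ℝ) - x < (kk : ℝ) * u + u := by
      have := (div_lt_iff₀ hu0).1 hfu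
      linarith [this]
    refine ⟨(n : ℝ) + (kk : ℝ) * t, ?_, S.add_mem (int_mem n) (pos_int_smul_mem htS (by omega))⟩
    rw [Metric.mem_ball, Real.dist_eq]
    have : (kk:ℝ) * t = -((kk:ℝ) * u) := by rw [hu]; ring
    rw [this]
    rw [abs_lt]
    rw [abs_of_neg htneg] at htr
    constructor <;> nlinarith
  · -- t > 0
    set n : ℤ := ⌊x⌋ - 1 with hn
    have hnx : (n : ℝ) ≤ x - 1 := by
      push_cast [hn]
      linarith [Int.floor_le x]
    set kk : ℤ := ⌊(x - (n : ℝ)) / t⌋ with hkk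
    have hk1 : 1 ≤ kk := by
      rw [hkk, Int.le_floor, le_div_iff₀ htpos]
      push_cast
      rw [abs_of_pos htpos] at ht1
      linarith
    have hfl := Int.floor_le ((x - (n : ℝ)) / t)
    have hfu := Int.lt_floor_add_one ((x - (n : ℝ)) / t)
    rw [← hkk] at hfl hfu
    have hkle : (kk : ℝ) * t ≤ x - (n : ℝ) := by
      rw [← le_div_iff₀ htpos]; exact hfl
    have hkgt : x - (n : ℝ) < (kk : ℝ) * t + t := by
      have := (div_lt_iff₀ htpos).1 hfu
      linarith [this]
    refine ⟨(n : ℝ) + (kk : ℝ) * t, ?_, S.add_mem (int_mem n) (pos_int_smul_mem htS (by omega))⟩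
    rw [Metric.mem_ball, Real.dist_eq, abs_lt]
    rw [abs_of_pos htpos] at htr
    constructor <;> nlinarith
end

section
/- For every t > 0 the value F(it) + H(it) is a real number, and the map t ↦ F(it) + H(it) from (0, ∞) to ℝ is surjective: for every r ∈ ℝ there exists t > 0 with F(it) + H(it) = r. -/
/-- `H(w) = ∑_{l=1}^∞ (e(w/2^l) − 1)` (indexing: `l = l' + 1`, `l' : ℕ`). -/
noncomputable def H (w : ℂ) : ℂ := ∑' l : ℕ, (e (w / 2 ^ (l + 1)) - 1)

noncomputable def gA (t : ℝ) : ℝ := ∑' n : ℕ, Real.exp (-(2 * Real.pi * (2 ^ n * t)))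
noncomputable def gB (t : ℝ) : ℝ := ∑' l : ℕ, (Real.exp (-(2 * Real.pi * (t / 2 ^ (l + 1)))) - 1)
noncomputable def g (t : ℝ) : ℝ := gA t + gB t

lemma exp_pow_aux (s : ℝ) (n : ℕ) :
    Real.exp (-(2 * Real.pi * (2 ^ n * s))) = Real.exp (-(2 * Real.pi * s)) ^ (2 ^ n) := by
  rw [← Real.exp_nat_mul]; congr 1; push_cast; ring

lemma exp_lt_one_aux {s : ℝ} (hs : 0 < s) : Real.exp (-(2 * Real.pi * s)) < 1 := by
  rw [Real.exp_lt_one_iff]; nlinarith [Real.pi_pos]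

lemma summable_A {t : ℝ} (ht : 0 < t) :
    Summable (fun n : ℕ => Real.exp (-(2 * Real.pi * (2 ^ n * t)))) := by
  refine Summable.of_nonneg_of_le (fun n => (Real.exp_pos _).le) (fun n => ?_)
    (summable_geometric_of_lt_one (Real.exp_pos _).le (exp_lt_one_aux ht))
  rw [exp_pow_aux]
  exact pow_le_pow_of_le_one (Real.exp_pos _).le (exp_lt_one_aux ht).le (Nat.lt_two_pow_self (n := n)).le

lemma abs_exp_neg_sub_one_le {x : ℝ} (hx : 0 ≤ x) : |Real.exp (-x) - 1| ≤ x := by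
  have h1 : Real.exp (-x) ≤ 1 := by rw [Real.exp_le_one_iff]; linarith
  have h2 := Real.add_one_le_exp (-x)
  rw [abs_le]; constructor <;> linarith

lemma B_bound {x : ℝ} (hx : 0 ≤ x) (l : ℕ) :
    |Real.exp (-(2 * Real.pi * (x / 2 ^ (l + 1)))) - 1| ≤ (Real.pi * x) * (1/2 : ℝ) ^ l := by
  have he : 2 * Real.pi * (x / 2 ^ (l + 1)) = (Real.pi * x) * (1/2 : ℝ) ^ l := by
    rw [pow_succ, one_div, inv_pow]; field_simp
  rw [he]
  exact abs_exp_neg_sub_one_le (by positivity)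

lemma summable_B {t : ℝ} (ht : 0 ≤ t) :
    Summable (fun l : ℕ => Real.exp (-(2 * Real.pi * (t / 2 ^ (l + 1)))) - 1) := by
  refine Summable.of_norm_bounded (g := fun l => (Real.pi * t) * (1/2 : ℝ) ^ l)
    ((summable_geometric_of_lt_one (by norm_num) (by norm_num)).mul_left _) (fun l => ?_)
  simpa [Real.norm_eq_abs] using B_bound ht l

lemma e_I_mul (x : ℝ) : e (Complex.I * x) = ((Real.exp (-(2 * Real.pi * x)) : ℝ) : ℂ) := by
  rw [e, Complex.ofReal_exp]
  congr 1
  have : (2 * (Real.pi : ℂ) * Complex.I * (Complex.I * x))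
      = Complex.I * Complex.I * (2 * Real.pi * x) := by ring
  rw [this, Complex.I_mul_I]
  push_cast; ring

lemma F_eq_s19 (t : ℝ) : F (Complex.I * t) = ((gA t : ℝ) : ℂ) := by
  rw [F, gA, Complex.ofReal_tsum]
  congr 1; funext n
  have h : ((2 ^ n : ℕ) : ℂ) * (Complex.I * t) = Complex.I * ((2 ^ n * t : ℝ) : ℂ) := by
    push_cast; ring
  rw [h, e_I_mul]

lemma H_eq (t : ℝ) : H (Complex.I * t) = ((gB t : ℝ) : ℂ) := by
  rw [H, gB, Complex.ofReal_tsum]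
  congr 1; funext l
  have h : (Complex.I * t) / 2 ^ (l + 1) = Complex.I * ((t / 2 ^ (l + 1) : ℝ) : ℂ) := by
    push_cast; ring
  rw [h, e_I_mul]; push_cast; ring

lemma gA_half {t : ℝ} (ht : 0 < t) : gA (t / 2) = Real.exp (-(Real.pi * t)) + gA t := by
  rw [gA, Summable.tsum_eq_zero_add (summable_A (by positivity))]
  congr 1
  · congr 1; ring_nf
  · rw [gA]; congr 1; funext n
    congr 2
    rw [pow_succ]; ring

lemma gB_split {t : ℝ} (ht : 0 < t) :
    gB t = (Real.exp (-(Real.pi * t)) - 1) + gB (t / 2) := by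
  rw [gB, Summable.tsum_eq_zero_add (summable_B ht.le)]
  congr 1
  · congr 2; norm_num; ring
  · rw [gB]; congr 1; funext l
    congr 3
    rw [pow_succ]; ring

lemma g_half {t : ℝ} (ht : 0 < t) : g (t / 2) = g t + 1 := by
  have h1 := gA_half ht
  have h2 := gB_split ht
  simp only [g]; linarith

lemma g_div_pow {t : ℝ} (ht : 0 < t) : ∀ k : ℕ, g (t / 2 ^ k) = g t + k := by
  intro k; induction k with
  | zero => simp
  | succ k ih =>
    have h2 : t / 2 ^ (k + 1) = (t / 2 ^ k) / 2 := by rw [pow_succ]; ring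
    rw [h2, g_half (by positivity), ih]; push_cast; ring

lemma g_mul_pow {t : ℝ} (ht : 0 < t) : ∀ m : ℕ, g (2 ^ m * t) = g t - m := by
  intro m; induction m with
  | zero => simp
  | succ m ih =>
    have h := g_half (t := 2 ^ (m + 1) * t) (by positivity)
    have h2 : (2 ^ (m + 1) * t) / 2 = 2 ^ m * t := by rw [pow_succ]; ring
    rw [h2, ih] at h
    push_cast; linarith

lemma contA {a : ℝ} (ha : 0 < a) :
    ContinuousOn (fun t : ℝ => ∑' n : ℕ, Real.exp (-(2 * Real.pi * (2 ^ n * t)))) (Set.Ici a) := by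
  apply continuousOn_tsum (u := fun n => Real.exp (-(2 * Real.pi * a)) ^ n)
  · intro n; fun_prop
  · exact summable_geometric_of_lt_one (Real.exp_pos _).le (exp_lt_one_aux ha)
  · intro n x hx
    rw [Real.norm_eq_abs, abs_of_pos (Real.exp_pos _)]
    have hax : a ≤ x := hx
    calc Real.exp (-(2 * Real.pi * (2 ^ n * x)))
        ≤ Real.exp (-(2 * Real.pi * (2 ^ n * a))) := by
          apply Real.exp_le_exp.mpr
          apply neg_le_neg
          gcongr
      _ = Real.exp (-(2 * Real.pi * a)) ^ (2 ^ n) := exp_pow_aux a n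
      _ ≤ Real.exp (-(2 * Real.pi * a)) ^ n :=
          pow_le_pow_of_le_one (Real.exp_pos _).le (exp_lt_one_aux ha).le (Nat.lt_two_pow_self (n := n)).le

lemma contB {b : ℝ} :
    ContinuousOn (fun t : ℝ => ∑' l : ℕ, (Real.exp (-(2 * Real.pi * (t / 2 ^ (l + 1)))) - 1))
      (Set.Icc 0 b) := by
  apply continuousOn_tsum (u := fun l => (Real.pi * b) * (1/2 : ℝ) ^ l)
  · intro l; fun_prop
  · exact (summable_geometric_of_lt_one (by norm_num) (by norm_num)).mul_left _
  · intro l x hx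
    rw [Real.norm_eq_abs]
    calc |Real.exp (-(2 * Real.pi * (x / 2 ^ (l + 1)))) - 1|
        ≤ (Real.pi * x) * (1/2 : ℝ) ^ l := B_bound hx.1 l
      _ ≤ (Real.pi * b) * (1/2 : ℝ) ^ l := by
          gcongr
          exact hx.2

lemma g_continuousAt {t : ℝ} (ht : 0 < t) : ContinuousAt g t := by
  have h1 : ContinuousOn (fun x : ℝ => gA x) (Set.Icc (t/2) (t+1)) :=
    (contA (half_pos ht)).mono (Set.Icc_subset_Ici_self)
  have h2 : ContinuousOn (fun x : ℝ => gB x) (Set.Icc (t/2) (t+1)) :=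
    (contB (b := t+1)).mono (Set.Icc_subset_Icc (by linarith) le_rfl)
  have h3 : ContinuousOn g (Set.Icc (t/2) (t+1)) := h1.add h2
  exact h3.continuousAt (Icc_mem_nhds (by linarith) (by linarith))

/-- For every `t > 0` the value `F(it) + H(it)` is real, and every real number
occurs as such a value for some `t > 0`. -/
theorem F_plus_H_real_and_surjective :
    (∀ t : ℝ, 0 < t → (F (Complex.I * t) + H (Complex.I * t)).im = 0) ∧
    (∀ r : ℝ, ∃ t : ℝ, 0 < t ∧ F (Complex.I * t) + H (Complex.I * t) = (r : ℂ)) := by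
  constructor
  · intro t ht
    rw [F_eq_s19, H_eq, ← Complex.ofReal_add, Complex.ofReal_im]
  · intro r
    obtain ⟨k, hk⟩ := exists_nat_ge (r - g 1)
    obtain ⟨m, hm⟩ := exists_nat_ge (g 1 - r)
    set a : ℝ := 1 / 2 ^ k with ha_def
    set b : ℝ := 2 ^ m with hb_def
    have ha : 0 < a := by positivity
    have hab : a ≤ b := by
      have h1 : a ≤ 1 := by
        rw [ha_def, div_le_one (by positivity)]
        exact one_le_pow₀ (by norm_num)
      have h2 : (1:ℝ) ≤ b := one_le_pow₀ (by norm_num)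
      linarith
    have hga : g a = g 1 + k := g_div_pow one_pos k
    have hgb : g b = g 1 - m := by
      have := g_mul_pow one_pos m
      simpa using this
    have hcont : ContinuousOn g (Set.Icc a b) := fun x hx =>
      (g_continuousAt (lt_of_lt_of_le ha hx.1)).continuousWithinAt
    have hr : r ∈ Set.Icc (g b) (g a) := by
      constructor
      · rw [hgb]; linarith
      · rw [hga]; linarith
    obtain ⟨t, htmem, hgt⟩ := intermediate_value_Icc' hab hcont hr
    refine ⟨t, lt_of_lt_of_le ha htmem.1, ?_⟩
    rw [F_eq_s19, H_eq, ← Complex.ofReal_add]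
    exact_mod_cast hgt
end
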